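/- arXiv:2411.10622 — 5 statements merged into one kernel-verified Lean document; each statement's English description precedes it below -/
import Mathlib

section
/- Universal approximation theorem (Cybenko): let σ : ℝ → ℝ be a continuous sigmoidal function, i.e., σ(t) → 1 as t → +∞ and σ(t) → 0 as t → −∞. Then for every n ≥ 1, every continuous function f : [0,1]^n → ℝ, and every ε > 0, there exist N ∈ ℕ, real coefficients α_1, …, α_N, vectors w_1, …, w_N ∈ ℝ^n, and real numbers b_1, …, b_N such that sup_{x ∈ [0,1]^n} | f(x) − Σ_{i=1}^{N} α_i σ(⟨w_i, x⟩ + b_i) | < ε; equivalently, finite sums of the form Σ_{i=1}^{N} α_i σ(⟨w_i, x⟩ + b_i) are dense in C([0,1]^n) with the supremum norm. -/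
set_option maxHeartbeats 1000000


open Filter Finset in
lemma sigmoid_step_approx (σ : ℝ → ℝ) (hσ_cont : Continuous σ)
    (hσ_top : Filter.Tendsto σ Filter.atTop (nhds 1))
    (hσ_bot : Filter.Tendsto σ Filter.atBot (nhds 0))
    (g : ℝ → ℝ) (hg : Continuous g) (M : ℝ) (hM : 0 < M)
    (ε : ℝ) (hε : 0 < ε) :
    ∃ (N : ℕ) (α lam b : ℕ → ℝ), ∀ t ∈ Set.Icc (-M) M,
      |g t - ∑ k ∈ Finset.range N, α k * σ (lam k * t + b k)| < ε := by
  classical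
  -- σ is globally bounded
  obtain ⟨C, hC1, hC⟩ : ∃ C : ℝ, 1 ≤ C ∧ ∀ s, |σ s| ≤ C := by
    have h1 : ∀ᶠ s in atTop, |σ s - 1| < 1 := by
      have := Metric.tendsto_nhds.mp hσ_top 1 one_pos
      simpa [Real.dist_eq] using this
    have h2 : ∀ᶠ s in atBot, |σ s - 0| < 1 := by
      have := Metric.tendsto_nhds.mp hσ_bot 1 one_pos
      simpa [Real.dist_eq] using this
    obtain ⟨A, hA⟩ := eventually_atTop.mp h1
    obtain ⟨B, hB⟩ := eventually_atBot.mp h2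
    obtain ⟨C0, hC0⟩ := (isCompact_Icc (a := B) (b := A)).exists_bound_of_continuousOn
      hσ_cont.continuousOn
    refine ⟨max (max C0 2) 1, le_max_right _ _, fun s => ?_⟩
    rcases le_or_gt s B with h | h
    · have h3 : |σ s| ≤ 1 := by
        have := hB s h; rw [sub_zero] at this; linarith
      calc |σ s| ≤ 1 := h3
        _ ≤ _ := le_max_right _ _
    · rcases le_or_gt A s with h' | h'
      · have h4 : |σ s| ≤ 2 := by
          have h5 := (hA s h').le
          calc |σ s| = |(σ s - 1) + 1| := by ring_nf
            _ ≤ |σ s - 1| + |(1:ℝ)| := abs_add_le _ _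
            _ ≤ 2 := by rw [abs_one]; linarith
        calc |σ s| ≤ 2 := h4
          _ ≤ max C0 2 := le_max_right _ _
          _ ≤ _ := le_max_left _ _
      · have h6 : |σ s| ≤ C0 := by
          have := hC0 s ⟨h.le, h'.le⟩
          simpa [Real.norm_eq_abs] using this
        calc |σ s| ≤ C0 := h6
          _ ≤ max C0 2 := le_max_left _ _
          _ ≤ _ := le_max_left _ _
  have hC0' : (0:ℝ) < C := lt_of_lt_of_le one_pos hC1
  set G : ℝ := |g (-M)| with hGdef
  have hG0 : 0 ≤ G := abs_nonneg _
  set η : ℝ := ε / (8 * C) with hηdef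
  have hη0 : 0 < η := by positivity
  -- uniform continuity of g on [-M, M]
  have hUC := (isCompact_Icc (a := -M) (b := M)).uniformContinuousOn_of_continuous
    hg.continuousOn
  obtain ⟨δ, hδ0, hδ⟩ := Metric.uniformContinuousOn_iff.mp hUC η hη0
  -- partition
  set d : ℝ := min δ 1 with hddef
  have hd0 : 0 < d := lt_min hδ0 one_pos
  set m : ℕ := ⌈2 * M / d⌉₊ + 1 with hmdef
  have hmR : (0:ℝ) < m := by positivity
  set Δ : ℝ := 2 * M / m with hΔdef
  have hΔ0 : 0 < Δ := by positivity
  have hΔd : Δ < d := by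
    rw [hΔdef, div_lt_iff₀ hmR]
    have h1 : 2 * M / d < m := by
      have h2 := Nat.le_ceil (2 * M / d)
      have h3 : ((⌈2 * M / d⌉₊ : ℝ) + 1 : ℝ) = (m : ℝ) := by rw [hmdef]; push_cast; ring
      linarith
    calc 2 * M = (2 * M / d) * d := by field_simp
      _ < m * d := mul_lt_mul_of_pos_right h1 hd0
      _ = d * m := mul_comm _ _
  have hΔ1 : Δ ≤ 1 := le_trans hΔd.le (min_le_right _ _)
  have hΔδ : Δ < δ := lt_of_lt_of_le hΔd (min_le_left _ _)
  have hmΔ : (m : ℝ) * Δ = 2 * M := by rw [hΔdef]; field_simp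
  -- points and coefficients
  set p : ℕ → ℝ := fun k => -M + k * Δ with hpdef
  have hp_mem : ∀ k : ℕ, k ≤ m → p k ∈ Set.Icc (-M) M := by
    intro k hk
    constructor
    · have : (0:ℝ) ≤ k * Δ := by positivity
      simp only [hpdef]; linarith
    · have : (k:ℝ) * Δ ≤ m * Δ := by
        apply mul_le_mul_of_nonneg_right _ hΔ0.le
        exact_mod_cast hk
      simp only [hpdef]; rw [hmΔ] at this; linarith
  set a : ℕ → ℝ := fun k => if k = 0 then g (-M) else g (p k) - g (p (k - 1)) with hadef
  have ha_small : ∀ i : ℕ, i < m → |a (i + 1)| ≤ η := by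
    intro i hi
    have h1 : p i ∈ Set.Icc (-M) M := hp_mem i (by omega)
    have h2 : p (i+1) ∈ Set.Icc (-M) M := hp_mem (i+1) (by omega)
    have h3 : dist (p (i+1)) (p i) < δ := by
      rw [Real.dist_eq]
      have h4 : p (i+1) - p i = Δ := by simp only [hpdef]; push_cast; ring
      rw [h4, abs_of_pos hΔ0]; exact hΔδ
    have h4 := hδ (p (i+1)) h2 (p i) h1 h3
    rw [Real.dist_eq] at h4
    have h5 : a (i+1) = g (p (i+1)) - g (p i) := by simp [hadef]
    rw [h5]; exact h4.le
  -- η' and tail threshold T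
  set η' : ℝ := ε / (8 * (G + m * η + 1)) with hη'def
  have hη'0 : 0 < η' := by positivity
  obtain ⟨T, hT1, hTtop, hTbot⟩ :
      ∃ T : ℝ, 1 ≤ T ∧ (∀ s, T ≤ s → |σ s - 1| ≤ η') ∧ (∀ s, s ≤ -T → |σ s| ≤ η') := by
    have h1 : ∀ᶠ s in atTop, |σ s - 1| < η' := by
      have := Metric.tendsto_nhds.mp hσ_top η' hη'0
      simpa [Real.dist_eq] using this
    have h2 : ∀ᶠ s in atBot, |σ s - 0| < η' := by
      have := Metric.tendsto_nhds.mp hσ_bot η' hη'0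
      simpa [Real.dist_eq] using this
    obtain ⟨A, hA⟩ := eventually_atTop.mp h1
    obtain ⟨B, hB⟩ := eventually_atBot.mp h2
    refine ⟨max 1 (max A (-B)), le_max_left _ _, fun s hs => ?_, fun s hs => ?_⟩
    · exact (hA s (le_trans (le_trans (le_max_left _ _) (le_max_right _ _)) hs)).le
    · have hBs : s ≤ B := by
        have h3 : -B ≤ max 1 (max A (-B)) := le_trans (le_max_right _ _) (le_max_right _ _)
        linarith
      have := (hB s hBs).le; rw [sub_zero] at this; exact this
  set lam : ℝ := T / Δ with hlamdef
  have hlam0 : 0 < lam := by positivity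
  have hlamΔ : lam * Δ = T := div_mul_cancel₀ _ hΔ0.ne'
  have hTlam : T ≤ lam := by
    rw [hlamdef, le_div_iff₀ hΔ0]
    exact mul_le_of_le_one_right (by linarith) hΔ1
  set b : ℕ → ℝ := fun k => if k = 0 then lam * (M + 1) else -(lam * p k) with hbdef
  refine ⟨m + 1, a, fun _ => lam, b, ?_⟩
  intro t ht
  obtain ⟨htl, htr⟩ := ht
  have htM0 : 0 ≤ t + M := by linarith
  set j : ℕ := ⌊(t + M) / Δ⌋₊ with hjdef
  have hjle : (j : ℝ) * Δ ≤ t + M := by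
    have h1 := Nat.floor_le (div_nonneg htM0 hΔ0.le)
    calc (j:ℝ) * Δ ≤ ((t + M) / Δ) * Δ := mul_le_mul_of_nonneg_right h1 hΔ0.le
      _ = t + M := by field_simp
  have hjlt : t + M < ((j : ℝ) + 1) * Δ := by
    have h1 := Nat.lt_floor_add_one ((t + M) / Δ)
    calc t + M = ((t + M) / Δ) * Δ := by field_simp
      _ < ((j:ℝ) + 1) * Δ := mul_lt_mul_of_pos_right h1 hΔ0
  have hjm : j ≤ m := by
    have h1 : (t + M) / Δ ≤ (m : ℝ) := by
      rw [div_le_iff₀ hΔ0]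
      linarith [hmΔ]
    have h2 := Nat.floor_mono h1
    rwa [Nat.floor_natCast] at h2
  have hpj : p j ∈ Set.Icc (-M) M := hp_mem j hjm
  have hpjle : p j ≤ t := by simp only [hpdef]; linarith
  have hpjlt : t - p j < Δ := by
    simp only [hpdef]
    have h5 : ((j:ℝ) + 1) * Δ = j * Δ + Δ := by ring
    linarith [hjlt]
  -- step 1 : g t close to g (p j)
  have step1 : |g t - g (p j)| < η := by
    have h1 := hδ t ⟨htl, htr⟩ (p j) hpj (by
      rw [Real.dist_eq, abs_of_nonneg (by linarith : (0:ℝ) ≤ t - p j)]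
      linarith)
    rwa [Real.dist_eq] at h1
  -- step 2 : telescoping identity
  set ind : ℕ → ℝ := fun k => if k ≤ j then 1 else 0 with hinddef
  have step2 : ∑ k ∈ Finset.range (m + 1), a k * ind k = g (p j) := by
    have h1 : ∑ k ∈ Finset.range (m + 1), a k * ind k
        = ∑ k ∈ Finset.range (j + 1), a k * ind k := by
      refine (Finset.sum_subset (Finset.range_subset_range.mpr (by omega)) ?_).symm
      intro k hk hk'
      have hnk : ¬ k ≤ j := by
        simp only [Finset.mem_range] at hk hk'; omega
      simp [hinddef, hnk]
    have h2 : ∑ k ∈ Finset.range (j + 1), a k * ind k = ∑ k ∈ Finset.range (j + 1), a k := by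
      apply Finset.sum_congr rfl
      intro k hk
      have hkj : k ≤ j := by simp only [Finset.mem_range] at hk; omega
      simp [hinddef, hkj]
    have h3 : ∑ k ∈ Finset.range (j + 1), a k = g (p j) := by
      rw [Finset.sum_range_succ']
      have h4 : ∀ i ∈ Finset.range j, a (i + 1) = g (p (i+1)) - g (p i) := by
        intro i _; simp [hadef]
      rw [Finset.sum_congr rfl h4, Finset.sum_range_sub (fun i => g (p i))]
      have h5 : a 0 = g (-M) := by simp [hadef]
      have h6 : p 0 = -M := by simp [hpdef]
      rw [h5, h6]; ring
    rw [h1, h2, h3]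
  -- error terms
  set err : ℕ → ℝ := fun k => |ind k - σ (lam * t + b k)| with herrdef
  have herr_le : ∀ k, err k ≤ 1 + C := by
    intro k
    have h1 : |ind k| ≤ 1 := by
      simp only [hinddef]; split <;> simp
    calc err k ≤ |ind k| + |σ (lam * t + b k)| := abs_sub _ _
      _ ≤ 1 + C := add_le_add h1 (hC _)
  have herr0 : err 0 ≤ η' := by
    have hind0 : ind 0 = 1 := by simp [hinddef]
    have hb0 : b 0 = lam * (M + 1) := by simp [hbdef]
    have harg : T ≤ lam * t + b 0 := by
      rw [hb0]
      have h1 : lam * t + lam * (M + 1) = lam * (t + M + 1) := by ring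
      rw [h1]
      calc T ≤ lam := hTlam
        _ = lam * 1 := (mul_one _).symm
        _ ≤ lam * (t + M + 1) := by
            apply mul_le_mul_of_nonneg_left _ hlam0.le
            linarith
    have h2 := hTtop _ harg
    simp only [herrdef, hind0]
    rwa [abs_sub_comm]
  have herr_good : ∀ k, 1 ≤ k → k ≤ m → k ≠ j → k ≠ j + 1 → err k ≤ η' := by
    intro k hk1 hkm hkj hkj1
    have hbk : b k = -(lam * p k) := by
      simp only [hbdef]; rw [if_neg (by omega)]
    have hargk : lam * t + b k = lam * (t - p k) := by rw [hbk]; ring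
    rcases le_or_gt k j with h | h
    · have hkj' : k + 1 ≤ j := by omega
      have h1 : Δ ≤ t - p k := by
        simp only [hpdef]
        have h2 : ((k:ℝ) + 1) * Δ ≤ (j:ℝ) * Δ := by
          apply mul_le_mul_of_nonneg_right _ hΔ0.le
          exact_mod_cast hkj'
        have h5 : ((k:ℝ) + 1) * Δ = k * Δ + Δ := by ring
        have h6 : (j:ℝ) * Δ ≤ t + M := hjle
        linarith
      have h3 : T ≤ lam * t + b k := by
        rw [hargk, ← hlamΔ]
        exact mul_le_mul_of_nonneg_left h1 hlam0.le
      have h4 := hTtop _ h3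
      have hindk : ind k = 1 := by simp [hinddef, h]
      simp only [herrdef, hindk]
      rwa [abs_sub_comm]
    · have hkj2 : j + 2 ≤ k := by omega
      have h1 : t - p k ≤ -Δ := by
        simp only [hpdef]
        have h2 : ((j:ℝ) + 2) * Δ ≤ (k:ℝ) * Δ := by
          apply mul_le_mul_of_nonneg_right _ hΔ0.le
          exact_mod_cast hkj2
        have h5 : ((j:ℝ) + 2) * Δ = (j + 1) * Δ + Δ := by ring
        linarith [hjlt]
      have h3 : lam * t + b k ≤ -T := by
        rw [hargk, ← hlamΔ]
        calc lam * (t - p k) ≤ lam * (-Δ) := mul_le_mul_of_nonneg_left h1 hlam0.le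
          _ = -(lam * Δ) := by ring
      have h4 := hTbot _ h3
      have hindk : ind k = 0 := by
        simp only [hinddef, if_neg (by omega : ¬ k ≤ j)]
      simp only [herrdef, hindk]
      rwa [zero_sub, abs_neg]
  -- step 3 : main sum bound
  have step3 : |g (p j) - ∑ k ∈ Finset.range (m + 1), a k * σ (lam * t + b k)|
      ≤ ∑ k ∈ Finset.range (m + 1), |a k| * err k := by
    rw [← step2, ← Finset.sum_sub_distrib]
    refine le_trans (Finset.abs_sum_le_sum_abs _ _) ?_
    apply Finset.sum_le_sum
    intro k _
    rw [← mul_sub, abs_mul]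
  have step4 : ∑ k ∈ Finset.range (m + 1), |a k| * err k
      ≤ G * η' + (m * (η * η') + (η * (1 + C) + η * (1 + C))) := by
    rw [Finset.sum_range_succ']
    have h0 : |a 0| * err 0 ≤ G * η' := by
      have ha0 : |a 0| = G := by simp [hadef, hGdef]
      rw [ha0]
      exact mul_le_mul_of_nonneg_left herr0 hG0
    have hterm : ∀ i ∈ Finset.range m,
        |a (i+1)| * err (i+1)
          ≤ η * η' + ((if i = j - 1 ∧ 1 ≤ j then η * (1+C) else 0)
              + (if i = j then η * (1+C) else 0)) := by
      intro i hi
      rw [Finset.mem_range] at hi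
      have ha := ha_small i hi
      have hηC : (0:ℝ) ≤ η * (1+C) := by positivity
      have hηη' : (0:ℝ) ≤ η * η' := by positivity
      have hb1 : |a (i+1)| * err (i+1) ≤ η * (1+C) :=
        mul_le_mul ha (herr_le (i+1)) (abs_nonneg _) hη0.le
      by_cases h1 : i + 1 = j
      · have hij : i = j - 1 ∧ 1 ≤ j := by omega
        rw [if_pos hij]
        have h5 : (0:ℝ) ≤ if i = j then η * (1+C) else 0 := by
          split
          · exact hηC
          · exact le_refl 0
        linarith
      · by_cases h2 : i + 1 = j + 1
        · have hij : i = j := by omega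
          rw [if_pos hij, if_neg (by omega : ¬ (i = j - 1 ∧ 1 ≤ j))]
          linarith
        · have hgood := herr_good (i+1) (by omega) (by omega) h1 h2
          have hb : |a (i+1)| * err (i+1) ≤ η * η' :=
            mul_le_mul ha hgood (abs_nonneg _) hη0.le
          have h3 : (0:ℝ) ≤ if i = j - 1 ∧ 1 ≤ j then η * (1+C) else 0 := by
            split
            · exact hηC
            · exact le_refl 0
          have h4 : (0:ℝ) ≤ if i = j then η * (1+C) else 0 := by
            split
            · exact hηC
            · exact le_refl 0
          linarith
    have hηC : (0:ℝ) ≤ η * (1+C) := by positivity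
    have hsum1 := Finset.sum_le_sum hterm
    have hA' : ∑ i ∈ Finset.range m, (if i = j - 1 ∧ 1 ≤ j then η * (1+C) else 0)
        ≤ η * (1+C) := by
      have hle : ∀ i ∈ Finset.range m, (if i = j - 1 ∧ 1 ≤ j then η * (1+C) else 0)
          ≤ (if i = j - 1 then η * (1+C) else 0) := by
        intro i _
        by_cases h : i = j - 1 ∧ 1 ≤ j
        · rw [if_pos h, if_pos h.1]
        · rw [if_neg h]
          split
          · exact hηC
          · exact le_refl 0
      refine le_trans (Finset.sum_le_sum hle) ?_
      rw [Finset.sum_ite_eq' (Finset.range m) (j-1) (fun _ => η * (1+C))]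
      split
      · exact le_refl _
      · exact hηC
    have hB' : ∑ i ∈ Finset.range m, (if i = j then η * (1+C) else 0) ≤ η * (1+C) := by
      rw [Finset.sum_ite_eq' (Finset.range m) j (fun _ => η * (1+C))]
      split
      · exact le_refl _
      · exact hηC
    have hsplit : ∑ i ∈ Finset.range m,
        (η * η' + ((if i = j - 1 ∧ 1 ≤ j then η * (1+C) else 0)
            + (if i = j then η * (1+C) else 0)))
        ≤ m * (η * η') + (η * (1 + C) + η * (1 + C)) := by
      rw [Finset.sum_add_distrib, Finset.sum_add_distrib, Finset.sum_const, Finset.card_range]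
      have := add_le_add hA' hB'
      simp only [nsmul_eq_mul]
      linarith
    linarith
  -- final numeric estimate
  have hfinal1 : η * (8 * C) = ε := by rw [hηdef]; field_simp
  have hfinal2 : (G + m * η + 1) * η' = ε / 8 := by
    rw [hη'def]; field_simp
  have hmη : (0:ℝ) ≤ (m:ℝ) * η := by positivity
  have e2 : G * η' + (m:ℝ) * (η * η') ≤ ε / 8 := by nlinarith
  have e3 : η * (1 + C) + η * (1 + C) ≤ ε / 2 := by nlinarith
  have e1 : η ≤ ε / 8 := by nlinarith
  calc |g t - ∑ k ∈ Finset.range (m + 1), a k * σ (lam * t + b k)|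
      ≤ |g t - g (p j)| + |g (p j) - ∑ k ∈ Finset.range (m + 1), a k * σ (lam * t + b k)| :=
        abs_sub_le _ _ _
    _ < η + (G * η' + ((m:ℝ) * (η * η') + (η * (1 + C) + η * (1 + C)))) := by
        have := le_trans step3 step4
        linarith
    _ ≤ ε / 8 + (ε / 8 + ε / 2) := by linarith
    _ < ε := by linarith

/-- **Universal approximation theorem (Cybenko).**
Let `σ : ℝ → ℝ` be a continuous sigmoidal function, i.e. `σ t → 1` as `t → +∞`
and `σ t → 0` as `t → −∞`.  Then for every `n ≥ 1`, every continuous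
`f : [0,1]^n → ℝ` and every `ε > 0` there are `N`, coefficients `α i`,
weight vectors `w i ∈ ℝ^n` and biases `b i` such that
`|f x − ∑_{i} α i · σ(⟨w i, x⟩ + b i)| < ε` for every `x ∈ [0,1]^n`
(equivalently, such finite sums are sup-norm dense in `C([0,1]^n)`). -/
theorem universal_approximation_cybenko
    (σ : ℝ → ℝ) (hσ_cont : Continuous σ)
    (hσ_top : Filter.Tendsto σ Filter.atTop (nhds 1))
    (hσ_bot : Filter.Tendsto σ Filter.atBot (nhds 0))
    (n : ℕ) (hn : 1 ≤ n)
    (f : (Fin n → ℝ) → ℝ) (hf : ContinuousOn f (Set.Icc 0 1))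
    (ε : ℝ) (hε : 0 < ε) :
    ∃ (N : ℕ) (α : Fin N → ℝ) (w : Fin N → Fin n → ℝ) (b : Fin N → ℝ),
      ∀ x ∈ Set.Icc (0 : Fin n → ℝ) 1,
        |f x - ∑ i : Fin N, α i * σ (∑ j : Fin n, w i j * x j + b i)| < ε := by
  classical
  set K : Set (Fin n → ℝ) := Set.Icc 0 1 with hK
  haveI : CompactSpace K := isCompact_iff_compactSpace.mp isCompact_Icc
  -- ridge sigmoid functions
  set ridge : ((Fin n → ℝ) × ℝ) → C(K, ℝ) := fun q =>
    ⟨fun x => σ (∑ j, q.1 j * (x : Fin n → ℝ) j + q.2),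
      hσ_cont.comp ((continuous_finset_sum Finset.univ fun j _ =>
        continuous_const.mul ((continuous_apply j).comp continuous_subtype_val)).add
        continuous_const)⟩ with hridge
  set V : Submodule ℝ C(K, ℝ) := Submodule.span ℝ (Set.range ridge) with hV
  -- exponentials of linear forms
  set expm : (Fin n → ℝ) → C(K, ℝ) := fun w =>
    ⟨fun x => Real.exp (∑ j, w j * (x : Fin n → ℝ) j),
      Real.continuous_exp.comp (continuous_finset_sum Finset.univ fun j _ =>
        continuous_const.mul ((continuous_apply j).comp continuous_subtype_val))⟩ with hexpm
  -- the range of expm is a submonoid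
  have hone : (1 : C(K, ℝ)) ∈ Set.range expm := by
    refine ⟨0, ?_⟩
    ext x
    simp [hexpm]
  have hmul : ∀ u v : C(K, ℝ), u ∈ Set.range expm → v ∈ Set.range expm →
      u * v ∈ Set.range expm := by
    rintro _ _ ⟨w1, rfl⟩ ⟨w2, rfl⟩
    refine ⟨w1 + w2, ?_⟩
    ext x
    simp only [hexpm, ContinuousMap.mul_apply, ContinuousMap.coe_mk, Pi.add_apply]
    rw [← Real.exp_add, ← Finset.sum_add_distrib]
    congr 1
    apply Finset.sum_congr rfl
    intro j _
    ring
  set E : Submonoid C(K, ℝ) :=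
    { carrier := Set.range expm
      one_mem' := hone
      mul_mem' := fun hu hv => hmul _ _ hu hv } with hE
  -- Stone-Weierstrass for the algebra generated by exponentials
  have hsep : (Algebra.adjoin ℝ (Set.range expm)).SeparatesPoints := by
    intro x y hxy
    have hxy' : (x : Fin n → ℝ) ≠ (y : Fin n → ℝ) := fun h => hxy (Subtype.ext h)
    obtain ⟨j0, hj0⟩ := Function.ne_iff.mp hxy'
    refine ⟨expm (Pi.single j0 1), ⟨expm (Pi.single j0 1),
      Algebra.subset_adjoin ⟨Pi.single j0 1, rfl⟩, rfl⟩, ?_⟩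
    have hval : ∀ z : K, expm (Pi.single j0 1) z = Real.exp ((z : Fin n → ℝ) j0) := by
      intro z
      simp only [hexpm, ContinuousMap.coe_mk]
      congr 1
      rw [Finset.sum_eq_single j0]
      · simp
      · intro c _ hc; simp [Pi.single_eq_of_ne hc]
      · intro hc; simp at hc
    rw [hval x, hval y]
    exact fun h => hj0 (Real.exp_injective h)
  have hdense := ContinuousMap.subalgebra_topologicalClosure_eq_top_of_separatesPoints
    (Algebra.adjoin ℝ (Set.range expm)) hsep
  -- every exponential lies in the closure of V
  have hEsub : Set.range expm ⊆ (V.topologicalClosure : Set C(K, ℝ)) := by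
    rintro _ ⟨w, rfl⟩
    have hmem : expm w ∈ closure (V : Set C(K, ℝ)) := by
      rw [Metric.mem_closure_iff]
      intro r hr
      set M : ℝ := ∑ j, |w j| + 1 with hM
      have hM0 : 0 < M := by positivity
      obtain ⟨N, α, lam, bb, happ⟩ := sigmoid_step_approx σ hσ_cont hσ_top hσ_bot
        Real.exp Real.continuous_exp M hM0 (r/2) (by linarith)
      set h : C(K, ℝ) := ∑ k ∈ Finset.range N, α k • ridge (lam k • w, bb k) with hh
      refine ⟨h, ?_, ?_⟩
      · apply Submodule.sum_mem
        intro k _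
        exact Submodule.smul_mem _ _ (Submodule.subset_span ⟨(lam k • w, bb k), rfl⟩)
      · have hb : dist (expm w) h ≤ r / 2 := by
          rw [ContinuousMap.dist_le (by linarith)]
          intro x
          have hx1 : ∀ j, 0 ≤ (x : Fin n → ℝ) j := fun j => x.2.1 j
          have hx2 : ∀ j, (x : Fin n → ℝ) j ≤ 1 := fun j => x.2.2 j
          have hs : (∑ j, w j * (x : Fin n → ℝ) j) ∈ Set.Icc (-M) M := by
            have habs : |∑ j, w j * (x : Fin n → ℝ) j| ≤ ∑ j, |w j| := by
              refine le_trans (Finset.abs_sum_le_sum_abs _ _) ?_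
              apply Finset.sum_le_sum
              intro j _
              rw [abs_mul]
              have h1 : |(x : Fin n → ℝ) j| ≤ 1 := by
                rw [abs_le]
                exact ⟨by linarith [hx1 j], hx2 j⟩
              calc |w j| * |(x : Fin n → ℝ) j| ≤ |w j| * 1 :=
                  mul_le_mul_of_nonneg_left h1 (abs_nonneg _)
                _ = |w j| := mul_one _
            rw [Set.mem_Icc, ← abs_le]
            calc |∑ j, w j * (x : Fin n → ℝ) j| ≤ ∑ j, |w j| := habs
              _ ≤ M := by rw [hM]; linarith
          have hhx : h x = ∑ k ∈ Finset.range N,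
              α k * σ (lam k * (∑ j, w j * (x : Fin n → ℝ) j) + bb k) := by
            rw [hh, ContinuousMap.sum_apply]
            apply Finset.sum_congr rfl
            intro k _
            rw [ContinuousMap.smul_apply, smul_eq_mul]
            simp only [hridge, ContinuousMap.coe_mk]
            simp only [Pi.smul_apply, smul_eq_mul, Finset.mul_sum, mul_assoc]
          rw [Real.dist_eq, hhx]
          have h2 := (happ _ hs).le
          simp only [hexpm, ContinuousMap.coe_mk]
          exact h2
        calc dist (expm w) h ≤ r / 2 := hb
          _ < r := by linarith
    rwa [Submodule.topologicalClosure_coe]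
  -- the closure of V is everything
  have huniv : (Set.univ : Set C(K, ℝ)) ⊆ (V.topologicalClosure : Set C(K, ℝ)) := by
    have hadj : ((Algebra.adjoin ℝ (Set.range expm) : Subalgebra ℝ C(K, ℝ)) : Set C(K, ℝ))
        ⊆ (V.topologicalClosure : Set C(K, ℝ)) := by
      intro a ha
      have h1 : a ∈ Subalgebra.toSubmodule (Algebra.adjoin ℝ (Set.range expm)) := ha
      rw [Algebra.adjoin_eq_span] at h1
      have h2 : Submonoid.closure (Set.range expm) = E := Submonoid.closure_eq E
      rw [h2] at h1
      have h3 : Submodule.span ℝ (E : Set C(K, ℝ)) ≤ V.topologicalClosure :=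
        Submodule.span_le.mpr hEsub
      exact h3 h1
    have h4 : closure ((Algebra.adjoin ℝ (Set.range expm) : Subalgebra ℝ C(K, ℝ)) : Set C(K, ℝ))
        ⊆ (V.topologicalClosure : Set C(K, ℝ)) :=
      closure_minimal hadj V.isClosed_topologicalClosure
    rw [← Subalgebra.topologicalClosure_coe, hdense, Algebra.coe_top] at h4
    exact h4
  -- extract a finite combination approximating f
  set fC : C(K, ℝ) := ⟨K.restrict f, ContinuousOn.restrict (by rw [hK]; exact hf)⟩ with hfC
  have hfCmem : fC ∈ closure (V : Set C(K, ℝ)) := by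
    have h5 := huniv (Set.mem_univ fC)
    rwa [Submodule.topologicalClosure_coe] at h5
  obtain ⟨g, hgV, hgdist⟩ := Metric.mem_closure_iff.mp hfCmem ε hε
  rw [SetLike.mem_coe, hV] at hgV
  obtain ⟨N, c, vs, hsum⟩ := Submodule.mem_span_set'.mp hgV
  choose q hq using fun i => (vs i).2
  refine ⟨N, c, fun i => (q i).1, fun i => (q i).2, ?_⟩
  intro x hx
  have heval : (∑ i : Fin N, c i * σ (∑ j : Fin n, (q i).1 j * x j + (q i).2))
      = g ⟨x, hx⟩ := by
    rw [← hsum, ContinuousMap.sum_apply]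
    apply Finset.sum_congr rfl
    intro i _
    rw [ContinuousMap.smul_apply, smul_eq_mul]
    congr 1
    rw [← hq i]
    simp [hridge]
  have hdistx := ContinuousMap.dist_apply_le_dist (f := fC) (g := g) ⟨x, hx⟩
  rw [Real.dist_eq] at hdistx
  have hfCx : fC ⟨x, hx⟩ = f x := rfl
  calc |f x - ∑ i : Fin N, c i * σ (∑ j : Fin n, (q i).1 j * x j + (q i).2)|
      = |f x - g ⟨x, hx⟩| := by rw [heval]
    _ ≤ dist fC g := by rw [← hfCx]; exact hdistx
    _ < ε := hgdist
end

section
/- Partition of unity for B-spline basis functions: for every nondecreasing knot vector t_0 ≤ t_1 ≤ ⋯ ≤ t_m, every degree p ≥ 0 with 2p < m, and every t ∈ [t_p, t_{m−p}), the B-spline basis functions sum to one: Σ_{i=0}^{m−p−1} B_{i,p}(t) = 1. -/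
/-- Cox–de Boor B-spline basis functions for knot vector `t`.  Degree `0`:
`B_{i,0}(x) = 1` on `[t i, t (i+1))` and `0` otherwise;  degree `p+1`:
`B_{i,p+1}(x) = (x − t i)/(t (i+p+1) − t i) · B_{i,p}(x)
  + (t (i+p+2) − x)/(t (i+p+2) − t (i+1)) · B_{i+1,p}(x)`,
where (by the convention `a / 0 = 0` of real division in Lean) any term whose
denominator vanishes is `0`. -/
noncomputable def bspline (t : ℕ → ℝ) : ℕ → ℕ → ℝ → ℝ
  | i, 0 => fun x => if t i ≤ x ∧ x < t (i + 1) then 1 else 0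
  | i, (p + 1) => fun x =>
      (x - t i) / (t (i + p + 1) - t i) * bspline t i p x +
      (t (i + p + 2) - x) / (t (i + p + 2) - t (i + 1)) * bspline t (i + 1) p x

lemma bspline_mono (m : ℕ) (t : ℕ → ℝ) (ht : ∀ j, j < m → t j ≤ t (j + 1)) :
    ∀ j k, j ≤ k → k ≤ m → t j ≤ t k := by
  intro j k hjk hkm
  induction k, hjk using Nat.le_induction with
  | base => exact le_refl _
  | succ k hk ih =>
    exact le_trans (ih (by omega)) (ht k (by omega))

lemma bspline_left (m : ℕ) (t : ℕ → ℝ) (ht : ∀ j, j < m → t j ≤ t (j + 1)) (x : ℝ) :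
    ∀ p i, i + p ≤ m → x < t i → bspline t i p x = 0 := by
  intro p
  induction p with
  | zero => intro i _ hx; simp [bspline]; intro h; linarith
  | succ p ih =>
    intro i hi hx
    simp only [bspline]
    rw [ih i (by omega) hx, ih (i+1) (by omega)
      (lt_of_lt_of_le hx (ht i (by omega)))]
    ring

lemma bspline_right (m : ℕ) (t : ℕ → ℝ) (ht : ∀ j, j < m → t j ≤ t (j + 1)) (x : ℝ) :
    ∀ p i, i + p + 1 ≤ m → t (i + p + 1) ≤ x → bspline t i p x = 0 := by
  intro p
  induction p with
  | zero => intro i _ hx; simp [bspline]; intro _; linarith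
  | succ p ih =>
    intro i hi hx
    simp only [bspline]
    rw [ih i (by omega) (le_trans (ht (i + p + 1) (by omega)) hx),
      ih (i + 1) (by omega) (by convert hx using 3; omega)]
    ring

lemma bspline_sum0 (t : ℕ → ℝ) (x : ℝ) :
    ∀ m, (∀ j, j < m → t j ≤ t (j + 1)) → t 0 ≤ x → x < t m →
      ∑ i ∈ Finset.range m, bspline t i 0 x = 1 := by
  intro m
  induction m with
  | zero => intro _ h1 h2; exfalso; linarith
  | succ m ih =>
    intro ht h1 h2
    rw [Finset.sum_range_succ]
    by_cases hc : x < t m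
    · rw [ih (fun j hj => ht j (by omega)) h1 hc]
      have : ¬ (t m ≤ x ∧ x < t (m + 1)) := by intro h; linarith [h.1]
      simp [bspline, this]
    · push_neg at hc
      have hz : ∑ i ∈ Finset.range m, bspline t i 0 x = 0 := by
        apply Finset.sum_eq_zero
        intro i hi
        simp only [Finset.mem_range] at hi
        have : t (i + 1) ≤ t m := bspline_mono (m+1) t ht (i+1) m (by omega) (by omega)
        simp [bspline]; intro _; linarith
      rw [hz]
      simp [bspline, hc, h2]

/-- **Partition of unity for B-spline basis functions:** for every nondecreasing
knot vector `t 0 ≤ t 1 ≤ ⋯ ≤ t m`, every degree `p` with `2p < m` and every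
`x ∈ [t p, t (m − p))`, the basis functions sum to one:
`∑_{i=0}^{m−p−1} B_{i,p}(x) = 1`. -/
theorem bspline_partition_of_unity (m : ℕ) (t : ℕ → ℝ)
    (ht : ∀ j, j < m → t j ≤ t (j + 1))
    (p : ℕ) (hpm : 2 * p < m) (x : ℝ) (hx : t p ≤ x ∧ x < t (m - p)) :
    ∑ i ∈ Finset.range (m - p), bspline t i p x = 1 := by
  obtain ⟨hx1, hx2⟩ := hx
  induction p with
  | zero => simpa using bspline_sum0 t x m ht hx1 (by simpa using hx2)
  | succ p ih =>
    have hpm' : 2 * p < m := by omega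
    have hx1' : t p ≤ x := le_trans (ht p (by omega)) hx1
    have hx2' : x < t (m - p) :=
      lt_of_lt_of_le hx2 (bspline_mono m t ht (m - (p+1)) (m - p) (by omega) (by omega))
    have IH := ih hpm' hx1' hx2'
    set k := m - p - 2 with hkdef
    have h0 : bspline t 0 p x = 0 :=
      bspline_right m t ht x p 0 (by omega) (by simpa using hx1)
    have hk : bspline t (k+1) p x = 0 :=
      bspline_left m t ht x p (k+1) (by omega)
        (by rw [show k + 1 = m - (p+1) from by omega]; exact hx2)
    have hmid : ∀ i ∈ Finset.range k,
        (x - t (i+1)) / (t (i + 1 + p + 1) - t (i+1)) * bspline t (i+1) p x +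
        (t (i + p + 2) - x) / (t (i + p + 2) - t (i + 1)) * bspline t (i+1) p x
          = bspline t (i+1) p x := by
      intro i hi
      simp only [Finset.mem_range] at hi
      have e : i + 1 + p + 1 = i + p + 2 := by omega
      rw [e]
      by_cases hd : t (i + p + 2) - t (i+1) = 0
      · have hz : bspline t (i+1) p x = 0 := by
          rcases lt_or_ge x (t (i+1)) with h | h
          · exact bspline_left m t ht x p (i+1) (by omega) h
          · exact bspline_right m t ht x p (i+1) (by omega)
              (by rw [show i + 1 + p + 1 = i + p + 2 from by omega]
                  linarith [sub_eq_zero.mp hd])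
        rw [hz]; ring
      · rw [← add_mul, ← add_div,
          show x - t (i+1) + (t (i + p + 2) - x) = t (i + p + 2) - t (i+1) from by ring,
          div_self hd, one_mul]
    have hstep : ∑ i ∈ Finset.range (m - (p+1)), bspline t i (p+1) x
        = ∑ i ∈ Finset.range (k+1),
            ((x - t i) / (t (i + p + 1) - t i) * bspline t i p x +
             (t (i + p + 2) - x) / (t (i + p + 2) - t (i + 1)) * bspline t (i+1) p x) := by
      rw [show m - (p+1) = k + 1 from by omega]
      exact Finset.sum_congr rfl fun i _ => by simp only [bspline]
    rw [hstep, Finset.sum_add_distrib, Finset.sum_range_succ', Finset.sum_range_succ,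
      h0, hk, mul_zero, mul_zero, add_zero, add_zero, ← Finset.sum_add_distrib,
      Finset.sum_congr rfl hmid]
    rw [show m - p = k + 2 from by omega, Finset.sum_range_succ, Finset.sum_range_succ',
      h0, hk, add_zero, add_zero] at IH
    exact IH
end

section
/- Smoothness of B-splines at simple knots: for every strictly increasing knot vector t_0 < t_1 < ⋯ < t_m, every degree p ≥ 1, and every admissible index i (with i + p + 1 ≤ m), the Cox–de Boor B-spline basis function B_{i,p} is (p−1)-times continuously differentiable on the open interval (t_0, t_m). -/
open Set Filter

section G
variable {E : Type*} [NormedAddCommGroup E] [NormedSpace ℝ E]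

lemma bs_glue {f g : ℝ → E} {x : ℝ} {s : Set ℝ} (hs : s ∈ nhds x)
    (f_diff : ∀ y ∈ s, y ≠ x → HasDerivAt f (g y) y)
    (hf : ContinuousAt f x) (hg : ContinuousAt g x) : HasDerivAt f (g x) x := by
  have A : HasDerivWithinAt f (g x) (Ici x) x := by
    have hs' : s ∩ Ioi x ∈ nhdsWithin x (Ioi x) :=
      inter_mem (mem_nhdsWithin_of_mem_nhds hs) self_mem_nhdsWithin
    have diff : DifferentiableOn ℝ f (s ∩ Ioi x) := fun y hy =>
      (f_diff y hy.1 (ne_of_gt hy.2)).differentiableAt.differentiableWithinAt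
    apply hasDerivWithinAt_Ici_of_tendsto_deriv diff hf.continuousWithinAt hs'
    have h0 : Tendsto g (nhdsWithin x (Ioi x)) (nhds (g x)) := tendsto_inf_left hg
    apply h0.congr'
    filter_upwards [hs'] with y hy using ((f_diff y hy.1 (ne_of_gt hy.2)).deriv).symm
  have B : HasDerivWithinAt f (g x) (Iic x) x := by
    have hs' : s ∩ Iio x ∈ nhdsWithin x (Iio x) :=
      inter_mem (mem_nhdsWithin_of_mem_nhds hs) self_mem_nhdsWithin
    have diff : DifferentiableOn ℝ f (s ∩ Iio x) := fun y hy =>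
      (f_diff y hy.1 (ne_of_lt hy.2)).differentiableAt.differentiableWithinAt
    apply hasDerivWithinAt_Iic_of_tendsto_deriv diff hf.continuousWithinAt hs'
    have h0 : Tendsto g (nhdsWithin x (Iio x)) (nhds (g x)) := tendsto_inf_left hg
    apply h0.congr'
    filter_upwards [hs'] with y hy using ((f_diff y hy.1 (ne_of_lt hy.2)).deriv).symm
  simpa using B.union A
end G

section BS

variable {m : ℕ} {t : ℕ → ℝ}

lemma bs_mono (ht : ∀ j, j < m → t j < t (j + 1)) :
    ∀ {j k : ℕ}, j < k → k ≤ m → t j < t k := by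
  intro j k
  induction k with
  | zero => omega
  | succ n ihn =>
    intro hjk hk
    rcases Nat.lt_succ_iff_lt_or_eq.mp hjk with h | h
    · exact (ihn h (by omega)).trans (ht n (by omega))
    · subst h; exact ht j (by omega)

lemma bs_b1_eq (ht : ∀ j, j < m → t j < t (j + 1)) {i : ℕ} (h : i + 2 ≤ m) (x : ℝ) :
    bspline t i 1 x =
      max 0 (min ((x - t i) / (t (i + 1) - t i)) ((t (i + 2) - x) / (t (i + 2) - t (i + 1)))) := by
  have h1 : t i < t (i + 1) := ht i (by omega)
  have h2 : t (i + 1) < t (i + 2) := ht (i + 1) (by omega)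
  have d1 : (0:ℝ) < t (i + 1) - t i := by linarith
  have d2 : (0:ℝ) < t (i + 2) - t (i + 1) := by linarith
  show (x - t i) / (t (i + 1) - t i) * (if t i ≤ x ∧ x < t (i + 1) then (1:ℝ) else 0) +
      (t (i + 2) - x) / (t (i + 2) - t (i + 1)) *
        (if t (i + 1) ≤ x ∧ x < t (i + 2) then (1:ℝ) else 0) = _
  rcases lt_or_ge x (t i) with hx | hx
  · rw [if_neg (by intro hc; linarith [hc.1]), if_neg (by intro hc; linarith [hc.1])]
    have ha : (x - t i) / (t (i + 1) - t i) < 0 := div_neg_of_neg_of_pos (by linarith) d1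
    rw [max_eq_left ((min_le_left _ _).trans ha.le)]
    ring
  · rcases lt_or_ge x (t (i + 1)) with hx1 | hx1
    · rw [if_pos ⟨hx, hx1⟩, if_neg (by intro hc; linarith [hc.1])]
      have hab : (x - t i) / (t (i + 1) - t i) ≤ (t (i + 2) - x) / (t (i + 2) - t (i + 1)) := by
        rw [div_le_div_iff₀ d1 d2]; nlinarith
      rw [min_eq_left hab, max_eq_right (div_nonneg (by linarith) d1.le)]
      ring
    · rcases lt_or_ge x (t (i + 2)) with hx2 | hx2
      · rw [if_neg (by intro hc; linarith [hc.2]), if_pos ⟨hx1, hx2⟩]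
        have hab : (t (i + 2) - x) / (t (i + 2) - t (i + 1)) ≤ (x - t i) / (t (i + 1) - t i) := by
          rw [div_le_div_iff₀ d2 d1]; nlinarith
        rw [min_eq_right hab, max_eq_right (div_nonneg (by linarith) d2.le)]
        ring
      · rw [if_neg (by intro hc; linarith [hc.2]), if_neg (by intro hc; linarith [hc.2])]
        have hb : (t (i + 2) - x) / (t (i + 2) - t (i + 1)) ≤ 0 :=
          div_nonpos_of_nonpos_of_nonneg (by linarith) d2.le
        rw [max_eq_left ((min_le_right _ _).trans hb)]
        ring

lemma bs_cont (ht : ∀ j, j < m → t j < t (j + 1)) :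
    ∀ p, 1 ≤ p → ∀ i, i + p + 1 ≤ m → Continuous (bspline t i p) := by
  intro p
  induction p with
  | zero => omega
  | succ q ih =>
    intro _ i hip
    match q, ih with
    | 0, _ =>
      have : bspline t i 1 = fun x =>
          max 0 (min ((x - t i) / (t (i + 1) - t i)) ((t (i + 2) - x) / (t (i + 2) - t (i + 1)))) :=
        funext (bs_b1_eq ht (by omega))
      rw [this]
      exact continuous_const.max (((continuous_id.sub continuous_const).div_const _).min
        ((continuous_const.sub continuous_id).div_const _))
    | (r + 1), ih =>
      show Continuous fun x =>
        (x - t i) / (t (i + (r + 1) + 1) - t i) * bspline t i (r + 1) x +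
        (t (i + (r + 1) + 2) - x) / (t (i + (r + 1) + 2) - t (i + 1)) * bspline t (i + 1) (r + 1) x
      exact (((continuous_id.sub continuous_const).div_const _).mul
          (ih (by omega) i (by omega))).add
        (((continuous_const.sub continuous_id).div_const _).mul
          (ih (by omega) (i + 1) (by omega)))

lemma bs_b0_eventually {i : ℕ} {x : ℝ} (h1 : x ≠ t i) (h2 : x ≠ t (i + 1)) :
    ∀ᶠ y in nhds x, bspline t i 0 y = bspline t i 0 x := by
  by_cases hx : t i ≤ x ∧ x < t (i + 1)
  · have hx1 : t i < x := lt_of_le_of_ne hx.1 (Ne.symm h1)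
    filter_upwards [Ioo_mem_nhds hx1 hx.2] with y hy
    show (if t i ≤ y ∧ y < t (i + 1) then (1:ℝ) else 0) =
      (if t i ≤ x ∧ x < t (i + 1) then (1:ℝ) else 0)
    rw [if_pos ⟨hy.1.le, hy.2⟩, if_pos hx]
  · push_neg at hx
    rcases lt_or_ge x (t i) with h | h
    · filter_upwards [Iio_mem_nhds h] with y hy
      show (if t i ≤ y ∧ y < t (i + 1) then (1:ℝ) else 0) =
        (if t i ≤ x ∧ x < t (i + 1) then (1:ℝ) else 0)
      rw [if_neg (fun hc => absurd (mem_Iio.mp hy) (not_lt.mpr hc.1)),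
        if_neg (by intro hc; linarith [hc.1])]
    · have h' : t (i + 1) < x := lt_of_le_of_ne (hx h) (Ne.symm h2)
      filter_upwards [Ioi_mem_nhds h'] with y hy
      show (if t i ≤ y ∧ y < t (i + 1) then (1:ℝ) else 0) =
        (if t i ≤ x ∧ x < t (i + 1) then (1:ℝ) else 0)
      rw [if_neg (by intro hc; linarith [hc.2, mem_Ioi.mp hy]),
        if_neg (by intro hc; linarith [hc.2])]

lemma bs_deriv (ht : ∀ j, j < m → t j < t (j + 1)) :
    ∀ q i, i + q + 2 ≤ m → ∀ x : ℝ, (∀ j, j ≤ m → x ≠ t j) →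
    HasDerivAt (bspline t i (q + 1))
      (((q : ℝ) + 1) / (t (i + q + 1) - t i) * bspline t i q x -
        ((q : ℝ) + 1) / (t (i + q + 2) - t (i + 1)) * bspline t (i + 1) q x) x := by
  intro q
  induction q with
  | zero =>
    intro i hip x hx
    have e1 := bs_b0_eventually (t := t) (i := i) (hx i (by omega)) (hx (i + 1) (by omega))
    have e2 := bs_b0_eventually (t := t) (i := i + 1) (hx (i + 1) (by omega)) (hx (i + 2) (by omega))
    have hl : HasDerivAt (fun y =>
        (y - t i) / (t (i + 1) - t i) * bspline t i 0 x +
        (t (i + 2) - y) / (t (i + 2) - t (i + 1)) * bspline t (i + 1) 0 x)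
        (1 / (t (i + 1) - t i) * bspline t i 0 x +
          (0 - 1) / (t (i + 2) - t (i + 1)) * bspline t (i + 1) 0 x) x := by
      exact ((((hasDerivAt_id x).sub_const (t i)).div_const _).mul_const _).add
        ((((hasDerivAt_const x (t (i + 2))).sub (hasDerivAt_id x)).div_const _).mul_const _)
    have heq : (fun y =>
        (y - t i) / (t (i + 1) - t i) * bspline t i 0 x +
        (t (i + 2) - y) / (t (i + 2) - t (i + 1)) * bspline t (i + 1) 0 x) =ᶠ[nhds x]
        bspline t i 1 := by
      filter_upwards [e1, e2] with y hy1 hy2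
      show _ = (y - t i) / (t (i + 0 + 1) - t i) * bspline t i 0 y +
        (t (i + 0 + 2) - y) / (t (i + 0 + 2) - t (i + 1)) * bspline t (i + 1) 0 y
      rw [hy1, hy2]
    have := hl.congr_of_eventuallyEq heq.symm
    refine this.congr_deriv ?_
    push_cast
    ring
  | succ q ih =>
    intro i hip x hx
    have IH1 := ih i (by omega) x hx
    have IH2 := ih (i + 1) (by omega) x hx
    rw [show i + 1 + q + 1 = i + q + 2 by omega, show i + 1 + q + 2 = i + q + 3 by omega,
      show i + 1 + 1 = i + 2 by omega] at IH2
    have h1 : HasDerivAt (fun y => (y - t i) / (t (i + q + 2) - t i) * bspline t i (q + 1) y)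
        (1 / (t (i + q + 2) - t i) * bspline t i (q + 1) x +
          (x - t i) / (t (i + q + 2) - t i) *
            (((q : ℝ) + 1) / (t (i + q + 1) - t i) * bspline t i q x -
              ((q : ℝ) + 1) / (t (i + q + 2) - t (i + 1)) * bspline t (i + 1) q x)) x :=
      (((hasDerivAt_id x).sub_const (t i)).div_const _).mul IH1
    have h2 : HasDerivAt (fun y =>
        (t (i + q + 3) - y) / (t (i + q + 3) - t (i + 1)) * bspline t (i + 1) (q + 1) y)
        ((0 - 1) / (t (i + q + 3) - t (i + 1)) * bspline t (i + 1) (q + 1) x +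
          (t (i + q + 3) - x) / (t (i + q + 3) - t (i + 1)) *
            (((q : ℝ) + 1) / (t (i + q + 2) - t (i + 1)) * bspline t (i + 1) q x -
              ((q : ℝ) + 1) / (t (i + q + 3) - t (i + 2)) * bspline t (i + 2) q x)) x :=
      (((hasDerivAt_const x (t (i + q + 3))).sub (hasDerivAt_id x)).div_const _).mul IH2
    have hsum := h1.add h2
    have hfun : bspline t i (q + 1 + 1) = fun y =>
        (y - t i) / (t (i + q + 2) - t i) * bspline t i (q + 1) y +
        (t (i + q + 3) - y) / (t (i + q + 3) - t (i + 1)) * bspline t (i + 1) (q + 1) y := rfl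
    rw [show i + (q + 1) + 1 = i + q + 2 from rfl, show i + (q + 1) + 2 = i + q + 3 from rfl, hfun]
    refine hsum.congr_deriv ?_
    have eB1 : bspline t i (q + 1) x = (x - t i) / (t (i + q + 1) - t i) * bspline t i q x +
        (t (i + q + 2) - x) / (t (i + q + 2) - t (i + 1)) * bspline t (i + 1) q x := rfl
    have eB2 : bspline t (i + 1) (q + 1) x =
        (x - t (i + 1)) / (t (i + 1 + q + 1) - t (i + 1)) * bspline t (i + 1) q x +
        (t (i + 1 + q + 2) - x) / (t (i + 1 + q + 2) - t (i + 1 + 1)) * bspline t (i + 1 + 1) q x :=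
      rfl
    rw [show i + 1 + q + 1 = i + q + 2 by omega, show i + 1 + q + 2 = i + q + 3 by omega,
      show i + 1 + 1 = i + 2 by omega] at eB2
    rw [eB1, eB2]
    have ha : t (i + q + 2) - t i ≠ 0 := ne_of_gt (sub_pos.mpr (bs_mono ht (by omega) (by omega)))
    have hb : t (i + q + 3) - t (i + 1) ≠ 0 :=
      ne_of_gt (sub_pos.mpr (bs_mono ht (by omega) (by omega)))
    have hc : t (i + q + 1) - t i ≠ 0 := ne_of_gt (sub_pos.mpr (bs_mono ht (by omega) (by omega)))
    have hd : t (i + q + 2) - t (i + 1) ≠ 0 :=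
      ne_of_gt (sub_pos.mpr (bs_mono ht (by omega) (by omega)))
    have he : t (i + q + 3) - t (i + 2) ≠ 0 :=
      ne_of_gt (sub_pos.mpr (bs_mono ht (by omega) (by omega)))
    push_cast
    field_simp
    ring

end BS

section BS2

variable {m : ℕ} {t : ℕ → ℝ}

lemma bs_deriv_all (ht : ∀ j, j < m → t j < t (j + 1)) (q i : ℕ) (h : i + q + 3 ≤ m) (x : ℝ) :
    HasDerivAt (bspline t i (q + 2))
      ((((q : ℝ) + 1) + 1) / (t (i + q + 2) - t i) * bspline t i (q + 1) x -
        (((q : ℝ) + 1) + 1) / (t (i + q + 3) - t (i + 1)) * bspline t (i + 1) (q + 1) x) x := by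
  have hF : (t '' {j | j ≤ m} \ {x}).Finite := ((Set.finite_Iic m).image t).subset diff_subset
  have hsnhds : (t '' {j | j ≤ m} \ {x})ᶜ ∈ nhds x :=
    hF.isClosed.isOpen_compl.mem_nhds (by simp)
  have hg : ContinuousAt (fun y => (((q : ℝ) + 1) + 1) / (t (i + q + 2) - t i) *
      bspline t i (q + 1) y -
      (((q : ℝ) + 1) + 1) / (t (i + q + 3) - t (i + 1)) * bspline t (i + 1) (q + 1) y) x := by
    exact ((continuous_const.mul (bs_cont ht (q + 1) (by omega) i (by omega))).sub
      (continuous_const.mul (bs_cont ht (q + 1) (by omega) (i + 1) (by omega)))).continuousAt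
  apply bs_glue hsnhds _ (bs_cont ht (q + 2) (by omega) i (by omega)).continuousAt hg
  intro y hy hyx
  have hy' : ∀ j, j ≤ m → y ≠ t j := by
    intro j hj heq
    exact hy ⟨⟨j, hj, heq.symm⟩, hyx⟩
  have := bs_deriv ht (q + 1) i (by omega) y hy'
  rw [show i + (q + 1) + 1 = i + q + 2 by omega, show i + (q + 1) + 2 = i + q + 3 by omega] at this
  refine this.congr_deriv ?_ ; push_cast ; ring

lemma bs_smooth (ht : ∀ j, j < m → t j < t (j + 1)) :
    ∀ p, 1 ≤ p → ∀ i, i + p + 1 ≤ m → ContDiff ℝ (p - 1 : ℕ) (bspline t i p) := by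
  intro p
  induction p with
  | zero => omega
  | succ q ih =>
    intro _ i hip
    match q, ih with
    | 0, _ =>
      have h0 : ((1 - 1 : ℕ) : WithTop ℕ∞) = 0 := by norm_num
      rw [h0, contDiff_zero]
      exact bs_cont ht 1 le_rfl i (by omega)
    | (r + 1), ih =>
      have hcast : ((r + 1 + 1 - 1 : ℕ) : WithTop ℕ∞) = ((r : ℕ) : WithTop ℕ∞) + 1 := by
        push_cast
        norm_num
      rw [hcast, contDiff_succ_iff_deriv]
      refine ⟨fun x => (bs_deriv_all ht r i (by omega) x).differentiableAt, by simp, ?_⟩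
      have hderiv : deriv (bspline t i (r + 2)) = fun x =>
          (((r : ℝ) + 1) + 1) / (t (i + r + 2) - t i) * bspline t i (r + 1) x -
          (((r : ℝ) + 1) + 1) / (t (i + r + 3) - t (i + 1)) * bspline t (i + 1) (r + 1) x :=
        funext fun x => (bs_deriv_all ht r i (by omega) x).deriv
      rw [hderiv]
      have h1 := ih (by omega) i (by omega)
      have h2 := ih (by omega) (i + 1) (by omega)
      simp only [Nat.add_sub_cancel] at h1 h2
      exact (contDiff_const.mul h1).sub (contDiff_const.mul h2)

end BS2

/-- **Smoothness of B-splines at simple knots:** for every strictly increasing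
knot vector `t 0 < t 1 < ⋯ < t m`, every degree `p ≥ 1` and every admissible
index `i` (with `i + p + 1 ≤ m`), the basis function `B_{i,p}` is `(p−1)`-times
continuously differentiable on the open interval `(t 0, t m)`. -/
theorem bspline_smoothness (m : ℕ) (t : ℕ → ℝ)
    (ht : ∀ j, j < m → t j < t (j + 1))
    (p i : ℕ) (hp : 1 ≤ p) (hip : i + p + 1 ≤ m) :
    ContDiffOn ℝ (p - 1 : ℕ) (bspline t i p) (Set.Ioo (t 0) (t m)) :=
  (bs_smooth ht p hp i hip).contDiffOn
end

section
/- Existence and uniqueness of the clamped cubic spline interpolant: let n ≥ 1, let x_0 < x_1 < ⋯ < x_n be real numbers, let y_0, y_1, …, y_n ∈ ℝ, and let k_0, k_n ∈ ℝ. Then there exists a unique function S : [x_0, x_n] → ℝ such that (i) S is twice continuously differentiable on [x_0, x_n], (ii) on each subinterval [x_{i−1}, x_i], 1 ≤ i ≤ n, S agrees with a polynomial of degree at most 3, (iii) S(x_i) = y_i for all 0 ≤ i ≤ n, and (iv) S′(x_0) = k_0 and S′(x_n) = k_n. -/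
open Set

/-- `S` is a cubic spline interpolant of the data `(x i, y i)`, `0 ≤ i ≤ n`:
it is twice continuously differentiable on `[x 0, x n]` (one-sided derivatives at
the endpoints), agrees with a polynomial of degree at most `3` on each subinterval
`[x (i-1), x i]`, and interpolates the data. -/
def IsCubicSplineInterpolant (n : ℕ) (x y : ℕ → ℝ) (S : ℝ → ℝ) : Prop :=
  ContDiffOn ℝ 2 S (Icc (x 0) (x n)) ∧
  (∀ i : ℕ, 1 ≤ i → i ≤ n → ∃ P : Polynomial ℝ, P.degree ≤ 3 ∧
    ∀ u ∈ Icc (x (i - 1)) (x i), S u = P.eval u) ∧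
  (∀ i : ℕ, i ≤ n → S (x i) = y i)

open Set Polynomial

noncomputable def hermC (a b ya yb ma mb : ℝ) : ℝ :=
  3*(yb-ya)/(b-a)^2 - (2*ma+mb)/(b-a)
noncomputable def hermD (a b ya yb ma mb : ℝ) : ℝ :=
  -2*(yb-ya)/(b-a)^3 + (ma+mb)/(b-a)^2

noncomputable def herm (a b ya yb ma mb : ℝ) : Polynomial ℝ :=
  C ya + C ma * (X - C a) + C (hermC a b ya yb ma mb) * (X - C a)^2
    + C (hermD a b ya yb ma mb) * (X - C a)^3

theorem herm_degree (a b ya yb ma mb : ℝ) : (herm a b ya yb ma mb).degree ≤ 3 := by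
  unfold herm
  compute_degree

theorem herm_eval_left (a b ya yb ma mb : ℝ) : (herm a b ya yb ma mb).eval a = ya := by
  simp [herm]

theorem herm_eval_right {a b : ℝ} (hab : a ≠ b) (ya yb ma mb : ℝ) :
    (herm a b ya yb ma mb).eval b = yb := by
  have h : b - a ≠ 0 := sub_ne_zero.mpr (Ne.symm hab)
  simp only [herm, hermC, hermD, eval_add, eval_mul, eval_pow, eval_sub, eval_C, eval_X]
  field_simp
  ring

theorem herm_deriv (a b ya yb ma mb : ℝ) :
    (herm a b ya yb ma mb).derivative =
      C ma + C (2*hermC a b ya yb ma mb) * (X - C a)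
        + C (3*hermD a b ya yb ma mb) * (X - C a)^2 := by
  unfold herm
  simp only [derivative_add, derivative_mul, derivative_C, derivative_pow, derivative_X, derivative_sub]
  simp only [C_mul]
  ring

theorem herm_deriv_eval_left (a b ya yb ma mb : ℝ) :
    (herm a b ya yb ma mb).derivative.eval a = ma := by
  simp [herm_deriv]

theorem herm_deriv_eval_right {a b : ℝ} (hab : a ≠ b) (ya yb ma mb : ℝ) :
    (herm a b ya yb ma mb).derivative.eval b = mb := by
  have h : b - a ≠ 0 := sub_ne_zero.mpr (Ne.symm hab)
  simp only [herm_deriv, hermC, hermD, eval_add, eval_mul, eval_pow, eval_sub, eval_C, eval_X]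
  field_simp
  ring

theorem herm_deriv2 (a b ya yb ma mb : ℝ) :
    (herm a b ya yb ma mb).derivative.derivative =
      C (2*hermC a b ya yb ma mb) + C (6*hermD a b ya yb ma mb) * (X - C a) := by
  rw [herm_deriv, show (6:ℝ) = 2*3 by norm_num]
  simp only [derivative_add, derivative_mul, derivative_C, derivative_pow, derivative_X, derivative_sub]
  simp only [C_mul]
  ring

theorem herm_deriv2_eval_left {a b : ℝ} (hab : a ≠ b) (ya yb ma mb : ℝ) :
    (herm a b ya yb ma mb).derivative.derivative.eval a
      = 6*(yb-ya)/(b-a)^2 - (4*ma+2*mb)/(b-a) := by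
  have h : b - a ≠ 0 := sub_ne_zero.mpr (Ne.symm hab)
  simp only [herm_deriv2, hermC, hermD, eval_add, eval_mul, eval_sub, eval_C, eval_X]
  field_simp
  ring

theorem herm_deriv2_eval_right {a b : ℝ} (hab : a ≠ b) (ya yb ma mb : ℝ) :
    (herm a b ya yb ma mb).derivative.derivative.eval b
      = -6*(yb-ya)/(b-a)^2 + (2*ma+4*mb)/(b-a) := by
  have h : b - a ≠ 0 := sub_ne_zero.mpr (Ne.symm hab)
  simp only [herm_deriv2, hermC, hermD, eval_add, eval_mul, eval_sub, eval_C, eval_X]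
  field_simp
  ring

theorem cubic_hermite_unique {P Q : Polynomial ℝ} {a b : ℝ} (hab : a ≠ b)
    (hPd : P.degree ≤ 3) (hQd : Q.degree ≤ 3)
    (h0 : P.eval a = Q.eval a) (h1 : P.eval b = Q.eval b)
    (h2 : P.derivative.eval a = Q.derivative.eval a)
    (h3 : P.derivative.eval b = Q.derivative.eval b) : P = Q := by
  by_contra hne
  set D := P - Q with hD
  have hDne : D ≠ 0 := sub_ne_zero.mpr hne
  have hdeg : D.degree ≤ 3 := le_trans (degree_sub_le P Q) (max_le hPd hQd)
  have key : ∀ t : ℝ, D.eval t = 0 → D.derivative.eval t = 0 → (X - C t)^2 ∣ D := by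
    intro t ht ht'
    have h2lt : 1 < D.rootMultiplicity t := by
      apply lt_rootMultiplicity_of_isRoot_iterate_derivative_of_mem_nonZeroDivisors hDne
      · intro m hm
        interval_cases m
        · simpa [IsRoot] using ht
        · simpa [IsRoot] using ht'
      · simpa using Submonoid.one_mem (nonZeroDivisors ℝ)
    calc (X - C t)^2 ∣ (X - C t)^(D.rootMultiplicity t) := pow_dvd_pow _ h2lt
      _ ∣ D := D.pow_rootMultiplicity_dvd t
  have ha : (X - C a)^2 ∣ D := key a (by simp [hD, h0]) (by simp [hD, h2])
  have hb : (X - C b)^2 ∣ D := key b (by simp [hD, h1]) (by simp [hD, h3])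
  have hcop : IsCoprime ((X - C a)^2) ((X - C b)^2) :=
    (isCoprime_X_sub_C_of_isUnit_sub (sub_ne_zero_of_ne hab).isUnit).pow
  have hdvd : (X - C a)^2 * (X - C b)^2 ∣ D := hcop.mul_dvd ha hb
  have h4 : (4 : WithBot ℕ) ≤ D.degree := by
    have hle := Polynomial.degree_le_of_dvd hdvd hDne
    have : degree ((X - C a)^2 * (X - C b)^2) = 4 := by
      simp only [degree_mul, degree_pow, degree_X_sub_C, smul_eq_mul, mul_one]
      decide
    rwa [this] at hle
  exact absurd (h4.trans hdeg) (by decide)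

variable {n : ℕ} {x : ℕ → ℝ}

theorem xmono (hx : ∀ i, i < n → x i < x (i + 1)) :
    ∀ {i j : ℕ}, i ≤ j → j ≤ n → x i ≤ x j := by
  intro i j hij hjn
  induction j with
  | zero => simp [Nat.le_zero.mp hij]
  | succ k ih =>
    rcases Nat.lt_or_ge i (k+1) with h | h
    · exact le_trans (ih (by omega) (by omega)) (le_of_lt (hx k (by omega)))
    · have : i = k + 1 := by omega
      simp [this]

theorem xstrict (hx : ∀ i, i < n → x i < x (i + 1)) {i j : ℕ} (hij : i < j) (hjn : j ≤ n) :
    x i < x j := by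
  have h1 : x i < x (i+1) := hx i (by omega)
  exact lt_of_lt_of_le h1 (xmono hx (by omega) hjn)

theorem piece_subset (hx : ∀ i, i < n → x i < x (i + 1)) {i : ℕ} (h1 : 1 ≤ i) (h2 : i ≤ n) :
    Icc (x (i-1)) (x i) ⊆ Icc (x 0) (x n) :=
  Icc_subset_Icc (xmono hx (by omega) (by omega)) (xmono hx h2 le_rfl)

theorem exists_piece (hx : ∀ i, i < n → x i < x (i + 1)) (hn : 1 ≤ n) {u : ℝ}
    (hu : u ∈ Icc (x 0) (x n)) :
    ∃ i, 1 ≤ i ∧ i ≤ n ∧ u ∈ Icc (x (i-1)) (x i) := by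
  classical
  set j := Nat.findGreatest (fun j => x j ≤ u) (n-1) with hj
  have hPj : x j ≤ u := Nat.findGreatest_spec (P := fun j => x j ≤ u) (Nat.zero_le _) hu.1
  refine ⟨j + 1, by omega, ?_, hPj, ?_⟩
  · have := Nat.findGreatest_le (P := fun j => x j ≤ u) (n-1)
    omega
  · rcases Nat.lt_or_ge j (n-1) with h | h
    · have := Nat.findGreatest_is_greatest (P := fun j => x j ≤ u) (k := j+1) (by rw [← hj]; omega) (by omega)
      simpa using le_of_not_ge this
    · have hjn : j = n - 1 := by
        have := Nat.findGreatest_le (P := fun j => x j ≤ u) (n-1); omega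
      have : j + 1 = n := by omega
      rw [this]; exact hu.2

/-- two pieces overlapping: if `u` lies in pieces `i < j` then `j = i+1` and `u = x i`. -/
theorem piece_overlap (hx : ∀ i, i < n → x i < x (i + 1)) {i j : ℕ}
    (h1 : 1 ≤ i) (h2 : i ≤ n) (h3 : 1 ≤ j) (h4 : j ≤ n) (hij : i < j) {u : ℝ}
    (hui : u ∈ Icc (x (i-1)) (x i)) (huj : u ∈ Icc (x (j-1)) (x j)) :
    j = i + 1 ∧ u = x i := by
  have hle : x (j-1) ≤ x i := le_trans huj.1 hui.2
  have hji : j - 1 ≤ i := by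
    by_contra hc
    exact absurd hle (not_le.mpr (xstrict hx (by omega) (by omega)))
  have hji' : j = i + 1 := by omega
  refine ⟨hji', le_antisymm hui.2 ?_⟩
  have : x (j-1) = x i := by rw [hji']; simp
  rw [← this]; exact huj.1

open Classical in
noncomputable def pieceIdx (n : ℕ) (x : ℕ → ℝ) (u : ℝ) : ℕ :=
  if h : ∃ i, 1 ≤ i ∧ i ≤ n ∧ u ≤ x i then Nat.find h else n

noncomputable def pwEval (n : ℕ) (x : ℕ → ℝ) (R : ℕ → Polynomial ℝ) : ℝ → ℝ :=
  fun u => (R (pieceIdx n x u)).eval u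

variable {n : ℕ} {x : ℕ → ℝ}

theorem pieceIdx_spec (hx : ∀ i, i < n → x i < x (i + 1)) {i : ℕ}
    (h1 : 1 ≤ i) (h2 : i ≤ n) {u : ℝ} (hu : u ∈ Icc (x (i-1)) (x i)) :
    pieceIdx n x u = i ∨
      (1 ≤ pieceIdx n x u ∧ pieceIdx n x u + 1 = i ∧ u = x (pieceIdx n x u)) := by
  classical
  have hex : ∃ j, 1 ≤ j ∧ j ≤ n ∧ u ≤ x j := ⟨i, h1, h2, hu.2⟩
  set j := pieceIdx n x u with hj
  have hjd : j = Nat.find hex := by rw [hj, pieceIdx, dif_pos hex]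
  have hspec := Nat.find_spec hex
  rw [← hjd] at hspec
  obtain ⟨hj1, hjn, hju⟩ := hspec
  have hle : j ≤ i := by rw [hjd]; exact Nat.find_le ⟨h1, h2, hu.2⟩
  rcases eq_or_lt_of_le hle with heq | hlt
  · exact Or.inl heq
  · have hxij : x j ≤ x (i-1) := xmono hx (by omega) (by omega)
    have hux : u = x j := le_antisymm hju (le_trans hxij hu.1)
    have hji : j = i - 1 := by
      by_contra hc
      have hlt2 : x j < x (i-1) := xstrict hx (by omega) (by omega)
      have := hu.1
      rw [hux] at this
      linarith
    exact Or.inr ⟨hj1, by omega, hux⟩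

theorem pwEval_piece (hx : ∀ i, i < n → x i < x (i + 1)) {R : ℕ → Polynomial ℝ}
    (hmatch : ∀ i, 1 ≤ i → i < n → (R i).eval (x i) = (R (i+1)).eval (x i))
    {i : ℕ} (h1 : 1 ≤ i) (h2 : i ≤ n) {u : ℝ} (hu : u ∈ Icc (x (i-1)) (x i)) :
    pwEval n x R u = (R i).eval u := by
  rcases pieceIdx_spec hx h1 h2 hu with h | ⟨hj1, h, hux⟩
  · rw [pwEval, h]
  · calc pwEval n x R u = (R (pieceIdx n x u)).eval u := rfl
      _ = (R (pieceIdx n x u)).eval (x (pieceIdx n x u)) := by rw [← hux]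
      _ = (R (pieceIdx n x u + 1)).eval (x (pieceIdx n x u)) :=
        hmatch (pieceIdx n x u) hj1 (by omega)
      _ = (R i).eval u := by rw [h, ← hux]

theorem glue_hasDerivWithinAt (hx : ∀ i, i < n → x i < x (i + 1)) (hn : 1 ≤ n)
    {f : ℝ → ℝ} {Q : ℕ → Polynomial ℝ}
    (hf : ∀ i, 1 ≤ i → i ≤ n → ∀ u ∈ Icc (x (i-1)) (x i), f u = (Q i).eval u)
    (hd : ∀ i, 1 ≤ i → i < n → (Q i).derivative.eval (x i) = (Q (i+1)).derivative.eval (x i))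
    {i : ℕ} (h1 : 1 ≤ i) (h2 : i ≤ n) {u : ℝ} (hu : u ∈ Icc (x (i-1)) (x i)) :
    HasDerivWithinAt f ((Q i).derivative.eval u) (Icc (x 0) (x n)) u := by
  set d := (Q i).derivative.eval u with hdd
  have hbig : u ∈ Icc (x 0) (x n) := piece_subset hx h1 h2 hu
  have left : x 0 < u → HasDerivWithinAt f d (Icc (x 0) (x n) ∩ Iic u) u := by
    intro h0u
    obtain ⟨j, hj1, hjn, hjlt, hjle, hjd⟩ :
        ∃ j, 1 ≤ j ∧ j ≤ n ∧ x (j-1) < u ∧ u ≤ x j ∧ (Q j).derivative.eval u = d := by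
      rcases lt_or_eq_of_le hu.1 with h' | h'
      · exact ⟨i, h1, h2, h', hu.2, rfl⟩
      · have hi2 : 2 ≤ i := by
          by_contra hc
          have hi1 : i = 1 := by omega
          rw [hi1] at h'
          simp only [Nat.sub_self] at h'
          rw [← h'] at h0u
          exact lt_irrefl _ h0u
        have hmatch := hd (i-1) (by omega) (by omega)
        rw [show i-1+1 = i by omega] at hmatch
        refine ⟨i-1, by omega, by omega, ?_, le_of_eq h'.symm, ?_⟩
        · have h3 : x (i-1-1) < x (i-1) := xstrict hx (by omega) (by omega)
          rwa [h'] at h3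
        · rw [hdd, ← h', hmatch]
    have hmem : Icc (x (j-1)) u ∈ nhdsWithin u (Icc (x 0) (x n) ∩ Iic u) := by
      apply mem_nhdsWithin.mpr
      refine ⟨Ioi (x (j-1)), isOpen_Ioi, hjlt, ?_⟩
      rintro v ⟨hv1, _, hv3⟩
      exact ⟨le_of_lt hv1, hv3⟩
    have hpoly : HasDerivWithinAt (fun v => (Q j).eval v) d (Icc (x 0) (x n) ∩ Iic u) u := by
      rw [← hjd]
      exact ((Q j).hasDerivAt u).hasDerivWithinAt
    apply hpoly.congr_of_eventuallyEq ?_ (hf j hj1 hjn u ⟨le_of_lt hjlt, hjle⟩)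
    filter_upwards [hmem] with v hv
    exact hf j hj1 hjn v ⟨hv.1, le_trans hv.2 hjle⟩
  have right : u < x n → HasDerivWithinAt f d (Icc (x 0) (x n) ∩ Ici u) u := by
    intro hun
    obtain ⟨j, hj1, hjn, hjle, hjlt, hjd⟩ :
        ∃ j, 1 ≤ j ∧ j ≤ n ∧ x (j-1) ≤ u ∧ u < x j ∧ (Q j).derivative.eval u = d := by
      rcases lt_or_eq_of_le hu.2 with h' | h'
      · exact ⟨i, h1, h2, hu.1, h', rfl⟩
      · have hin : i < n := by
          by_contra hc
          have : i = n := by omega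
          rw [this] at h'
          rw [h'] at hun
          exact lt_irrefl _ hun
        have hmatch := hd i h1 hin
        refine ⟨i+1, by omega, by omega, ?_, ?_, ?_⟩
        · simp only [Nat.add_sub_cancel]
          exact le_of_eq h'.symm
        · rw [h']
          exact xstrict hx (by omega) (by omega)
        · rw [hdd, h', ← hmatch]
    have hmem : Icc u (x j) ∈ nhdsWithin u (Icc (x 0) (x n) ∩ Ici u) := by
      apply mem_nhdsWithin.mpr
      refine ⟨Iio (x j), isOpen_Iio, hjlt, ?_⟩
      rintro v ⟨hv1, _, hv3⟩
      exact ⟨hv3, le_of_lt hv1⟩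
    have hpoly : HasDerivWithinAt (fun v => (Q j).eval v) d (Icc (x 0) (x n) ∩ Ici u) u := by
      rw [← hjd]
      exact ((Q j).hasDerivAt u).hasDerivWithinAt
    apply hpoly.congr_of_eventuallyEq ?_ (hf j hj1 hjn u ⟨hjle, le_of_lt hjlt⟩)
    filter_upwards [hmem] with v hv
    exact hf j hj1 hjn v ⟨le_trans hjle hv.1, hv.2⟩
  rcases eq_or_lt_of_le hbig.1 with h0 | h0
  · have hset : Icc (x 0) (x n) ∩ Ici u = Icc (x 0) (x n) := by
      apply inter_eq_self_of_subset_left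
      intro v hv
      rw [← h0]
      exact hv.1
    have hun : u < x n := by
      rw [← h0]
      exact xstrict hx (by omega) le_rfl
    rw [← hset]
    exact right hun
  rcases eq_or_lt_of_le hbig.2 with hn' | hn'
  · have hset : Icc (x 0) (x n) ∩ Iic u = Icc (x 0) (x n) := by
      apply inter_eq_self_of_subset_left
      intro v hv
      rw [hn']
      exact hv.2
    rw [← hset]
    exact left h0
  · have hcup := (left h0).union (right hn')
    rwa [← inter_union_distrib_left, Iic_union_Ici, inter_univ] at hcup

theorem glue_continuousWithinAt (hx : ∀ i, i < n → x i < x (i + 1)) (hn : 1 ≤ n)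
    {f : ℝ → ℝ} {Q : ℕ → Polynomial ℝ}
    (hf : ∀ i, 1 ≤ i → i ≤ n → ∀ u ∈ Icc (x (i-1)) (x i), f u = (Q i).eval u)
    {i : ℕ} (h1 : 1 ≤ i) (h2 : i ≤ n) {u : ℝ} (hu : u ∈ Icc (x (i-1)) (x i)) :
    ContinuousWithinAt f (Icc (x 0) (x n)) u := by
  have hbig : u ∈ Icc (x 0) (x n) := piece_subset hx h1 h2 hu
  have left : x 0 < u → ContinuousWithinAt f (Icc (x 0) (x n) ∩ Iic u) u := by
    intro h0u
    obtain ⟨j, hj1, hjn, hjlt, hjle⟩ :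
        ∃ j, 1 ≤ j ∧ j ≤ n ∧ x (j-1) < u ∧ u ≤ x j := by
      rcases lt_or_eq_of_le hu.1 with h' | h'
      · exact ⟨i, h1, h2, h', hu.2⟩
      · have hi2 : 2 ≤ i := by
          by_contra hc
          have hi1 : i = 1 := by omega
          rw [hi1] at h'
          simp only [Nat.sub_self] at h'
          rw [← h'] at h0u
          exact lt_irrefl _ h0u
        refine ⟨i-1, by omega, by omega, ?_, le_of_eq h'.symm⟩
        have h3 : x (i-1-1) < x (i-1) := xstrict hx (by omega) (by omega)
        rwa [h'] at h3
    have hmem : Icc (x (j-1)) u ∈ nhdsWithin u (Icc (x 0) (x n) ∩ Iic u) := by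
      apply mem_nhdsWithin.mpr
      refine ⟨Ioi (x (j-1)), isOpen_Ioi, hjlt, ?_⟩
      rintro v ⟨hv1, _, hv3⟩
      exact ⟨le_of_lt hv1, hv3⟩
    have hpoly : ContinuousWithinAt (fun v => (Q j).eval v) (Icc (x 0) (x n) ∩ Iic u) u :=
      ((Q j).continuous_aeval.continuousAt).continuousWithinAt
    apply hpoly.congr_of_eventuallyEq ?_ (hf j hj1 hjn u ⟨le_of_lt hjlt, hjle⟩)
    filter_upwards [hmem] with v hv
    exact hf j hj1 hjn v ⟨hv.1, le_trans hv.2 hjle⟩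
  have right : u < x n → ContinuousWithinAt f (Icc (x 0) (x n) ∩ Ici u) u := by
    intro hun
    obtain ⟨j, hj1, hjn, hjle, hjlt⟩ :
        ∃ j, 1 ≤ j ∧ j ≤ n ∧ x (j-1) ≤ u ∧ u < x j := by
      rcases lt_or_eq_of_le hu.2 with h' | h'
      · exact ⟨i, h1, h2, hu.1, h'⟩
      · have hin : i < n := by
          by_contra hc
          have : i = n := by omega
          rw [this] at h'
          rw [h'] at hun
          exact lt_irrefl _ hun
        refine ⟨i+1, by omega, by omega, ?_, ?_⟩
        · simp only [Nat.add_sub_cancel]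
          exact le_of_eq h'.symm
        · rw [h']
          exact xstrict hx (by omega) (by omega)
    have hmem : Icc u (x j) ∈ nhdsWithin u (Icc (x 0) (x n) ∩ Ici u) := by
      apply mem_nhdsWithin.mpr
      refine ⟨Iio (x j), isOpen_Iio, hjlt, ?_⟩
      rintro v ⟨hv1, _, hv3⟩
      exact ⟨hv3, le_of_lt hv1⟩
    have hpoly : ContinuousWithinAt (fun v => (Q j).eval v) (Icc (x 0) (x n) ∩ Ici u) u :=
      ((Q j).continuous_aeval.continuousAt).continuousWithinAt
    apply hpoly.congr_of_eventuallyEq ?_ (hf j hj1 hjn u ⟨hjle, le_of_lt hjlt⟩)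
    filter_upwards [hmem] with v hv
    exact hf j hj1 hjn v ⟨le_trans hjle hv.1, hv.2⟩
  rcases eq_or_lt_of_le hbig.1 with h0 | h0
  · have hset : Icc (x 0) (x n) ∩ Ici u = Icc (x 0) (x n) := by
      apply inter_eq_self_of_subset_left
      intro v hv
      rw [← h0]
      exact hv.1
    have hun : u < x n := by
      rw [← h0]
      exact xstrict hx (by omega) le_rfl
    rw [← hset]
    exact right hun
  rcases eq_or_lt_of_le hbig.2 with hn' | hn'
  · have hset : Icc (x 0) (x n) ∩ Iic u = Icc (x 0) (x n) := by
      apply inter_eq_self_of_subset_left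
      intro v hv
      rw [hn']
      exact hv.2
    rw [← hset]
    exact left h0
  · have hcup := (left h0).union (right hn')
    rwa [← inter_union_distrib_left, Iic_union_Ici, inter_univ] at hcup

theorem deriv_on_piece (hx : ∀ i, i < n → x i < x (i + 1)) (hn : 1 ≤ n)
    {f : ℝ → ℝ} {Q : ℕ → Polynomial ℝ}
    (hdiff : DifferentiableOn ℝ f (Icc (x 0) (x n)))
    (hf : ∀ i, 1 ≤ i → i ≤ n → ∀ u ∈ Icc (x (i-1)) (x i), f u = (Q i).eval u)
    {i : ℕ} (h1 : 1 ≤ i) (h2 : i ≤ n) {u : ℝ} (hu : u ∈ Icc (x (i-1)) (x i)) :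
    derivWithin f (Icc (x 0) (x n)) u = (Q i).derivative.eval u := by
  have hbig : u ∈ Icc (x 0) (x n) := piece_subset hx h1 h2 hu
  have hud : UniqueDiffWithinAt ℝ (Icc (x (i-1)) (x i)) u :=
    uniqueDiffOn_Icc (xstrict hx (by omega) h2) u hu
  have H1 : HasDerivWithinAt f (derivWithin f (Icc (x 0) (x n)) u) (Icc (x (i-1)) (x i)) u :=
    ((hdiff u hbig).hasDerivWithinAt).mono (piece_subset hx h1 h2)
  have H2 : HasDerivWithinAt f ((Q i).derivative.eval u) (Icc (x (i-1)) (x i)) u := by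
    apply (((Q i).hasDerivAt u).hasDerivWithinAt).congr (fun v hv => hf i h1 h2 v hv)
      (hf i h1 h2 u hu)
  rw [← H1.derivWithin hud, ← H2.derivWithin hud]

noncomputable def hstep (x : ℕ → ℝ) (i : ℕ) : ℝ := x i - x (i-1)

noncomputable def trid (x : ℕ → ℝ) (w : ℕ → ℝ) (i : ℕ) : ℝ :=
  (2/hstep x i) * w (i-1) + (4/hstep x i + 4/hstep x (i+1)) * w i
    + (2/hstep x (i+1)) * w (i+1)

noncomputable def extv (n : ℕ) (v : Fin (n+1) → ℝ) : ℕ → ℝ :=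
  fun i => if h : i < n+1 then v ⟨i, h⟩ else 0

theorem extv_add (n : ℕ) (v w : Fin (n+1) → ℝ) : extv n (v + w) = extv n v + extv n w := by
  funext i
  simp only [extv, Pi.add_apply]
  split_ifs <;> simp

theorem extv_smul (n : ℕ) (c : ℝ) (v : Fin (n+1) → ℝ) : extv n (c • v) = c • extv n v := by
  funext i
  simp only [extv, Pi.smul_apply, smul_eq_mul]
  split_ifs <;> simp

theorem trid_add (x : ℕ → ℝ) (v w : ℕ → ℝ) (i : ℕ) :
    trid x (v + w) i = trid x v i + trid x w i := by
  simp only [trid, Pi.add_apply]; ring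

theorem trid_smul (x : ℕ → ℝ) (c : ℝ) (v : ℕ → ℝ) (i : ℕ) :
    trid x (c • v) i = c * trid x v i := by
  simp only [trid, Pi.smul_apply, smul_eq_mul]; ring

noncomputable def Lmap (n : ℕ) (x : ℕ → ℝ) : (Fin (n+1) → ℝ) →ₗ[ℝ] (Fin (n+1) → ℝ) where
  toFun v := fun j => if j.1 = 0 ∨ j.1 = n then v j else trid x (extv n v) j.1
  map_add' v w := by
    funext j
    by_cases h : j.1 = 0 ∨ j.1 = n
    · simp [h, -Fin.val_eq_zero_iff]
    · simp [h, extv_add, trid_add, -Fin.val_eq_zero_iff]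
  map_smul' c v := by
    funext j
    by_cases h : j.1 = 0 ∨ j.1 = n
    · simp [h, -Fin.val_eq_zero_iff]
    · simp [h, extv_smul, trid_smul, -Fin.val_eq_zero_iff]

theorem Lmap_inj {n : ℕ} {x : ℕ → ℝ} (hx : ∀ i, i < n → x i < x (i + 1)) (hn : 1 ≤ n) :
    Function.Injective (Lmap n x) := by
  have hstep_pos : ∀ i, 1 ≤ i → i ≤ n → 0 < hstep x i := by
    intro i hi1 hi2
    have := xstrict hx (show i - 1 < i by omega) hi2
    simp only [hstep]; linarith
  have key : ∀ v, Lmap n x v = 0 → v = 0 := by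
    intro v hv0
    obtain ⟨j, -, hjmax⟩ := Finset.exists_max_image Finset.univ (fun l => |v l|)
      ⟨⟨0, by omega⟩, Finset.mem_univ _⟩
    have hvj : v j = 0 := by
      by_cases hj0 : j.1 = 0 ∨ j.1 = n
      · have h := congrFun hv0 j
        simpa [Lmap, hj0, -Fin.val_eq_zero_iff] using h
      · push_neg at hj0
        have hj1 : 1 ≤ j.1 := by omega
        have hjn : j.1 < n := by
          have := j.2; omega
        have heq : trid x (extv n v) j.1 = 0 := by
          have h := congrFun hv0 j
          simpa [Lmap, hj0.1, hj0.2, -Fin.val_eq_zero_iff] using h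
        set a := 2/hstep x j.1 with hadef
        set c := 2/hstep x (j.1+1) with hcdef
        have ha : 0 < a := by
          apply div_pos (by norm_num) (hstep_pos _ hj1 (by omega))
        have hc : 0 < c := by
          apply div_pos (by norm_num) (hstep_pos _ (by omega) (by omega))
        have hv1 : extv n v (j.1-1) = v ⟨j.1-1, by omega⟩ := dif_pos (by omega)
        have hv2 : extv n v j.1 = v j := by
          rw [extv, dif_pos (by omega : j.1 < n + 1)]
        have hv3 : extv n v (j.1+1) = v ⟨j.1+1, by omega⟩ := dif_pos (by omega)
        rw [trid, hv1, hv2, hv3] at heq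
        set v1 := v ⟨j.1-1, by omega⟩
        set v2 := v j
        set v3 := v ⟨j.1+1, by omega⟩
        have h1 : |v1| ≤ |v2| := hjmax _ (Finset.mem_univ _)
        have h3 : |v3| ≤ |v2| := hjmax _ (Finset.mem_univ _)
        have hac : 4/hstep x j.1 + 4/hstep x (j.1+1) = 2*a + 2*c := by
          rw [hadef, hcdef]; ring
        rw [hac] at heq
        have e2 : (2*a+2*c) * v2 = -(a*v1 + c*v3) := by linarith
        have habs1 : (2*a+2*c) * |v2| = |a*v1 + c*v3| := by
          rw [← abs_of_pos (by linarith : (0:ℝ) < 2*a+2*c), ← abs_mul, e2, abs_neg]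
        have habs2 : |a*v1 + c*v3| ≤ a*|v1| + c*|v3| := by
          refine (abs_add_le _ _).trans ?_
          rw [abs_mul, abs_mul, abs_of_pos ha, abs_of_pos hc]
        have : |v2| = 0 := by nlinarith [abs_nonneg v2]
        exact abs_eq_zero.mp this
    funext l
    have : |v l| ≤ |v j| := hjmax _ (Finset.mem_univ _)
    rw [hvj] at this
    simp only [abs_zero] at this
    exact abs_nonpos_iff.mp this
  intro v w h
  have : Lmap n x (v - w) = 0 := by rw [map_sub, h, sub_self]
  have := key _ this
  exact sub_eq_zero.mp this

theorem Lmap_surj {n : ℕ} {x : ℕ → ℝ} (hx : ∀ i, i < n → x i < x (i + 1)) (hn : 1 ≤ n) :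
    Function.Surjective (Lmap n x) :=
  LinearMap.injective_iff_surjective.mp (Lmap_inj hx hn)

noncomputable def rrv (x y : ℕ → ℝ) (i : ℕ) : ℝ :=
  6*(y i - y (i-1))/(hstep x i)^2 + 6*(y (i+1) - y i)/(hstep x (i+1))^2

theorem trid_bridge {h1 h2 d1 d2 w0 w1 w2 : ℝ} (hh1 : 0 < h1) (hh2 : 0 < h2) :
    (-6*d1/h1^2 + (2*w0+4*w1)/h1 = 6*d2/h2^2 - (4*w1+2*w2)/h2) ↔
      ((2/h1)*w0 + (4/h1+4/h2)*w1 + (2/h2)*w2 = 6*d1/h1^2 + 6*d2/h2^2) := by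
  have key : (-6*d1/h1^2 + (2*w0+4*w1)/h1) - (6*d2/h2^2 - (4*w1+2*w2)/h2)
      = ((2/h1)*w0 + (4/h1+4/h2)*w1 + (2/h2)*w2) - (6*d1/h1^2 + 6*d2/h2^2) := by
    ring
  constructor <;> intro H <;> linarith

theorem slopes_unique {n : ℕ} {x : ℕ → ℝ} (hx : ∀ i, i < n → x i < x (i + 1)) (hn : 1 ≤ n)
    {α β : ℝ} {r : ℕ → ℝ} {w1 w2 : ℕ → ℝ}
    (h10 : w1 0 = α) (h1n : w1 n = β) (h1s : ∀ i, 1 ≤ i → i < n → trid x w1 i = r i)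
    (h20 : w2 0 = α) (h2n : w2 n = β) (h2s : ∀ i, 1 ≤ i → i < n → trid x w2 i = r i) :
    ∀ i, i ≤ n → w1 i = w2 i := by
  set v : Fin (n+1) → ℝ := fun j => w1 j.1 - w2 j.1 with hv
  have hL : Lmap n x v = 0 := by
    funext j
    show (if j.1 = 0 ∨ j.1 = n then v j else trid x (extv n v) j.1) = 0
    by_cases hj : j.1 = 0 ∨ j.1 = n
    · rw [if_pos hj]
      rcases hj with hj | hj <;> simp [hv, hj, h10, h20, h1n, h2n]
    · rw [if_neg hj]
      push_neg at hj
      have hj1 : 1 ≤ j.1 := by omega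
      have hjn : j.1 < n := by have := j.2; omega
      have e1 : extv n v (j.1-1) = w1 (j.1-1) - w2 (j.1-1) := by
        rw [extv, dif_pos (by omega : j.1 - 1 < n+1)]
      have e2 : extv n v j.1 = w1 j.1 - w2 j.1 := by
        rw [extv, dif_pos (by omega : j.1 < n+1)]
      have e3 : extv n v (j.1+1) = w1 (j.1+1) - w2 (j.1+1) := by
        rw [extv, dif_pos (by omega : j.1 + 1 < n+1)]
      have : trid x (extv n v) j.1 = trid x w1 j.1 - trid x w2 j.1 := by
        simp only [trid, e1, e2, e3]; ring
      rw [this, h1s _ hj1 hjn, h2s _ hj1 hjn, sub_self]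
  have hv0 : v = 0 := by
    apply Lmap_inj hx hn
    rw [hL, map_zero]
  intro i hi
  have := congrFun hv0 ⟨i, by omega⟩
  simpa [hv, sub_eq_zero] using this

theorem Lmap_apply (n : ℕ) (x : ℕ → ℝ) (v : Fin (n+1) → ℝ) (j : Fin (n+1)) :
    Lmap n x v j = if j.1 = 0 ∨ j.1 = n then v j else trid x (extv n v) j.1 := rfl


/-- **Existence and uniqueness of the clamped cubic spline interpolant.**
For `n ≥ 1`, nodes `x 0 < x 1 < ⋯ < x n`, values `y 0, …, y n` and endpoint
slopes `k₀, kₙ ∈ ℝ` there is a function `S : [x 0, x n] → ℝ`, unique as a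
function on `[x 0, x n]`, that is a cubic spline interpolant of the data and
satisfies the clamped boundary conditions `S′(x 0) = k₀` and `S′(x n) = kₙ`. -/
theorem clamped_cubic_spline_exists_unique
    (n : ℕ) (hn : 1 ≤ n) (x : ℕ → ℝ) (hx : ∀ i, i < n → x i < x (i + 1))
    (y : ℕ → ℝ) (k₀ kₙ : ℝ) :
    ∃ S : ℝ → ℝ,
      (IsCubicSplineInterpolant n x y S ∧
        derivWithin S (Icc (x 0) (x n)) (x 0) = k₀ ∧
        derivWithin S (Icc (x 0) (x n)) (x n) = kₙ) ∧
      ∀ T : ℝ → ℝ,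
        (IsCubicSplineInterpolant n x y T ∧
          derivWithin T (Icc (x 0) (x n)) (x 0) = k₀ ∧
          derivWithin T (Icc (x 0) (x n)) (x n) = kₙ) →
        EqOn T S (Icc (x 0) (x n)) := by
  classical
  have hx0n : x 0 < x n := xstrict hx (by omega) le_rfl
  have hUD : UniqueDiffOn ℝ (Icc (x 0) (x n)) := uniqueDiffOn_Icc hx0n
  have hne : ∀ i, 1 ≤ i → i ≤ n → x (i-1) ≠ x i :=
    fun i a b => ne_of_lt (xstrict hx (by omega) b)
  have hpos : ∀ i, 1 ≤ i → i ≤ n → 0 < hstep x i := by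
    intro i a b
    have := xstrict hx (show i-1 < i by omega) b
    simp only [hstep]; linarith
  -- solve the tridiagonal system for the slopes
  obtain ⟨v, hv⟩ := Lmap_surj hx hn
    (fun j => if j.1 = 0 then k₀ else if j.1 = n then kₙ else rrv x y j.1)
  set m : ℕ → ℝ := extv n v with hm
  have hm0 : m 0 = k₀ := by
    have h0 := congrFun hv ⟨0, by omega⟩
    rw [Lmap_apply] at h0
    simp at h0
    simpa [hm, extv] using h0
  have hmn : m n = kₙ := by
    have h0 := congrFun hv ⟨n, by omega⟩
    rw [Lmap_apply] at h0
    have hnz : ¬ (n = 0) := by omega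
    simp [hnz] at h0
    simpa [hm, extv] using h0
  have hsys : ∀ i, 1 ≤ i → i < n → trid x m i = rrv x y i := by
    intro i hi1 hi2
    have h0 := congrFun hv ⟨i, by omega⟩
    rw [Lmap_apply] at h0
    have c1 : ¬ ((⟨i, by omega⟩ : Fin (n+1)).1 = 0 ∨ (⟨i, by omega⟩ : Fin (n+1)).1 = n) := by
      simp; omega
    rw [if_neg c1] at h0
    simpa [show ¬ i = 0 by omega, show ¬ i = n by omega] using h0
  -- the Hermite pieces
  set P : ℕ → Polynomial ℝ :=
    fun i => herm (x (i-1)) (x i) (y (i-1)) (y i) (m (i-1)) (m i) with hPdef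
  have hPe_l : ∀ i, (P i).eval (x (i-1)) = y (i-1) := fun i => herm_eval_left _ _ _ _ _ _
  have hPe_r : ∀ i, 1 ≤ i → i ≤ n → (P i).eval (x i) = y i :=
    fun i a b => herm_eval_right (hne i a b) _ _ _ _
  have hPd_l : ∀ i, (P i).derivative.eval (x (i-1)) = m (i-1) :=
    fun i => herm_deriv_eval_left _ _ _ _ _ _
  have hPd_r : ∀ i, 1 ≤ i → i ≤ n → (P i).derivative.eval (x i) = m i :=
    fun i a b => herm_deriv_eval_right (hne i a b) _ _ _ _
  have hM0 : ∀ i, 1 ≤ i → i < n → (P i).eval (x i) = (P (i+1)).eval (x i) := by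
    intro i a b
    rw [hPe_r i a (by omega)]
    have := hPe_l (i+1)
    simp only [Nat.add_sub_cancel] at this
    rw [this]
  have hM1 : ∀ i, 1 ≤ i → i < n →
      (P i).derivative.eval (x i) = (P (i+1)).derivative.eval (x i) := by
    intro i a b
    rw [hPd_r i a (by omega)]
    have := hPd_l (i+1)
    simp only [Nat.add_sub_cancel] at this
    rw [this]
  have hM2 : ∀ i, 1 ≤ i → i < n →
      (P i).derivative.derivative.eval (x i) = (P (i+1)).derivative.derivative.eval (x i) := by
    intro i a b
    have hL := herm_deriv2_eval_right (hne i a (by omega)) (y (i-1)) (y i) (m (i-1)) (m i)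
    have hR := herm_deriv2_eval_left (hne (i+1) (by omega) (by omega))
      (y (i+1-1)) (y (i+1)) (m (i+1-1)) (m (i+1))
    simp only [Nat.add_sub_cancel] at hR
    show (P i).derivative.derivative.eval (x i) = (P (i+1)).derivative.derivative.eval (x i)
    rw [hPdef]
    simp only [Nat.add_sub_cancel]
    rw [hL, hR]
    have harg : (2/hstep x i) * m (i-1) + (4/hstep x i + 4/hstep x (i+1)) * m i
        + (2/hstep x (i+1)) * m (i+1)
        = 6*(y i - y (i-1))/(hstep x i)^2 + 6*(y (i+1) - y i)/(hstep x (i+1))^2 := by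
      have := hsys i a b
      rw [trid] at this
      rw [this, rrv]
    have := (trid_bridge (hpos i a (by omega)) (hpos (i+1) (by omega) (by omega))).mpr harg
    simp only [hstep, Nat.add_sub_cancel] at this
    exact this
  -- the spline
  set S : ℝ → ℝ := pwEval n x P with hSdef
  set S1 : ℝ → ℝ := pwEval n x (fun i => (P i).derivative) with hS1def
  set S2 : ℝ → ℝ := pwEval n x (fun i => (P i).derivative.derivative) with hS2def
  have hSpiece : ∀ i, 1 ≤ i → i ≤ n → ∀ u ∈ Icc (x (i-1)) (x i), S u = (P i).eval u :=
    fun i a b u hu => pwEval_piece hx hM0 a b hu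
  have hS1piece : ∀ i, 1 ≤ i → i ≤ n → ∀ u ∈ Icc (x (i-1)) (x i),
      S1 u = (P i).derivative.eval u :=
    fun i a b u hu => pwEval_piece hx hM1 a b hu
  have hS2piece : ∀ i, 1 ≤ i → i ≤ n → ∀ u ∈ Icc (x (i-1)) (x i),
      S2 u = (P i).derivative.derivative.eval u :=
    fun i a b u hu => pwEval_piece hx hM2 a b hu
  have hSd : ∀ u ∈ Icc (x 0) (x n), HasDerivWithinAt S (S1 u) (Icc (x 0) (x n)) u := by
    intro u hu
    obtain ⟨i, a, b, hpu⟩ := exists_piece hx hn hu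
    rw [hS1piece i a b u hpu]
    exact glue_hasDerivWithinAt hx hn hSpiece hM1 a b hpu
  have hSdiff : DifferentiableOn ℝ S (Icc (x 0) (x n)) :=
    fun u hu => (hSd u hu).differentiableWithinAt
  have hSderiv : ∀ u ∈ Icc (x 0) (x n), derivWithin S (Icc (x 0) (x n)) u = S1 u :=
    fun u hu => (hSd u hu).derivWithin (hUD u hu)
  have hS1d : ∀ u ∈ Icc (x 0) (x n), HasDerivWithinAt S1 (S2 u) (Icc (x 0) (x n)) u := by
    intro u hu
    obtain ⟨i, a, b, hpu⟩ := exists_piece hx hn hu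
    rw [hS2piece i a b u hpu]
    exact glue_hasDerivWithinAt hx hn hS1piece hM2 a b hpu
  have hS1diff : DifferentiableOn ℝ S1 (Icc (x 0) (x n)) :=
    fun u hu => (hS1d u hu).differentiableWithinAt
  have hS1deriv : ∀ u ∈ Icc (x 0) (x n), derivWithin S1 (Icc (x 0) (x n)) u = S2 u :=
    fun u hu => (hS1d u hu).derivWithin (hUD u hu)
  have hS2cont : ContinuousOn S2 (Icc (x 0) (x n)) := by
    intro u hu
    obtain ⟨i, a, b, hpu⟩ := exists_piece hx hn hu
    exact glue_continuousWithinAt hx hn hS2piece a b hpu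
  have hScd : ContDiffOn ℝ 2 S (Icc (x 0) (x n)) := by
    rw [show ((2 : WithTop ℕ∞)) = 1 + 1 by norm_num]
    rw [contDiffOn_succ_iff_derivWithin hUD]
    refine ⟨hSdiff, by simp, ?_⟩
    apply ContDiffOn.congr _ hSderiv
    rw [show ((1 : WithTop ℕ∞)) = 0 + 1 by norm_num]
    rw [contDiffOn_succ_iff_derivWithin hUD]
    refine ⟨hS1diff, by simp, ?_⟩
    apply ContDiffOn.congr _ hS1deriv
    exact contDiffOn_zero.mpr hS2cont
  have hSy : ∀ i, i ≤ n → S (x i) = y i := by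
    intro i hi
    rcases Nat.eq_zero_or_pos i with h0 | h0
    · subst h0
      have hp : x 0 ∈ Icc (x (1-1)) (x 1) := by
        constructor
        · simp
        · exact le_of_lt (xstrict hx (by omega) hn)
      rw [hSpiece 1 le_rfl hn _ hp]
      have := hPe_l 1
      simpa using this
    · have hp : x i ∈ Icc (x (i-1)) (x i) :=
        ⟨le_of_lt (xstrict hx (by omega) hi), le_rfl⟩
      rw [hSpiece i h0 hi _ hp, hPe_r i h0 hi]
  have hbd0 : derivWithin S (Icc (x 0) (x n)) (x 0) = k₀ := by
    have hp : x 0 ∈ Icc (x (1-1)) (x 1) := by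
      constructor
      · simp
      · exact le_of_lt (xstrict hx (by omega) hn)
    rw [hSderiv (x 0) ⟨le_rfl, le_of_lt hx0n⟩, hS1piece 1 le_rfl hn _ hp]
    have := hPd_l 1
    simp only [Nat.sub_self] at this
    rw [this, hm0]
  have hbdn : derivWithin S (Icc (x 0) (x n)) (x n) = kₙ := by
    have hp : x n ∈ Icc (x (n-1)) (x n) :=
      ⟨le_of_lt (xstrict hx (by omega) le_rfl), le_rfl⟩
    rw [hSderiv (x n) ⟨le_of_lt hx0n, le_rfl⟩, hS1piece n hn le_rfl _ hp,
      hPd_r n hn le_rfl, hmn]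
  refine ⟨S, ⟨⟨hScd, fun i a b => ⟨P i, herm_degree _ _ _ _ _ _, hSpiece i a b⟩, hSy⟩,
    hbd0, hbdn⟩, ?_⟩
  -- uniqueness
  rintro T ⟨⟨hTcd, hTpieces, hTy⟩, hTd0, hTdn⟩
  choose! Q hQdeg hQeq using hTpieces
  have hTdiff : DifferentiableOn ℝ T (Icc (x 0) (x n)) :=
    hTcd.differentiableOn (by norm_num)
  have hTg : ∀ i, 1 ≤ i → i ≤ n → ∀ u ∈ Icc (x (i-1)) (x i),
      derivWithin T (Icc (x 0) (x n)) u = (Q i).derivative.eval u :=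
    fun i a b u hu => deriv_on_piece hx hn hTdiff hQeq a b hu
  set μ : ℕ → ℝ := fun i => derivWithin T (Icc (x 0) (x n)) (x i) with hμ
  have hpleft : ∀ i, 1 ≤ i → i ≤ n → x (i-1) ∈ Icc (x (i-1)) (x i) :=
    fun i a b => ⟨le_rfl, le_of_lt (xstrict hx (by omega) b)⟩
  have hpright : ∀ i, 1 ≤ i → i ≤ n → x i ∈ Icc (x (i-1)) (x i) :=
    fun i a b => ⟨le_of_lt (xstrict hx (by omega) b), le_rfl⟩
  have hQherm : ∀ i, 1 ≤ i → i ≤ n →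
      Q i = herm (x (i-1)) (x i) (y (i-1)) (y i) (μ (i-1)) (μ i) := by
    intro i a b
    apply cubic_hermite_unique (hne i a b) (hQdeg i a b) (herm_degree _ _ _ _ _ _)
    · rw [herm_eval_left, ← hQeq i a b _ (hpleft i a b), hTy (i-1) (by omega)]
    · rw [herm_eval_right (hne i a b), ← hQeq i a b _ (hpright i a b), hTy i b]
    · rw [herm_deriv_eval_left, ← hTg i a b _ (hpleft i a b)]
    · rw [herm_deriv_eval_right (hne i a b), ← hTg i a b _ (hpright i a b)]
  have hgdiff : DifferentiableOn ℝ (derivWithin T (Icc (x 0) (x n))) (Icc (x 0) (x n)) := by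
    have h2 := (contDiffOn_succ_iff_derivWithin hUD).mp
      (show ContDiffOn ℝ ((1 : WithTop ℕ∞) + 1) T (Icc (x 0) (x n)) by
        rw [show ((1 : WithTop ℕ∞) + 1) = 2 by norm_num]; exact hTcd)
    exact h2.2.2.differentiableOn one_ne_zero
  have hsecond : ∀ i, 1 ≤ i → i < n →
      (Q i).derivative.derivative.eval (x i) = (Q (i+1)).derivative.derivative.eval (x i) := by
    intro i a b
    have e1 := deriv_on_piece hx hn hgdiff hTg a (by omega) (hpright i a (by omega))
    have e2 := deriv_on_piece hx hn hgdiff hTg (show 1 ≤ i+1 by omega) (by omega)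
      (hpleft (i+1) (by omega) (by omega))
    simp only [Nat.add_sub_cancel] at e2
    rw [← e1, ← e2]
  have hμsys : ∀ i, 1 ≤ i → i < n → trid x μ i = rrv x y i := by
    intro i a b
    have := hsecond i a b
    rw [hQherm i a (by omega), hQherm (i+1) (by omega) (by omega)] at this
    rw [herm_deriv2_eval_right (hne i a (by omega))] at this
    have hR := herm_deriv2_eval_left (hne (i+1) (by omega) (by omega))
      (y (i+1-1)) (y (i+1)) (μ (i+1-1)) (μ (i+1))
    simp only [Nat.add_sub_cancel] at hR this
    rw [hR] at this
    have hthis : -6*(y i - y (i-1))/(hstep x i)^2 + (2*μ (i-1)+4*μ i)/(hstep x i)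
        = 6*(y (i+1) - y i)/(hstep x (i+1))^2 - (4*μ i+2*μ (i+1))/(hstep x (i+1)) := by
      simpa [hstep, Nat.add_sub_cancel] using this
    have harg := (trid_bridge (hpos i a (by omega)) (hpos (i+1) (by omega) (by omega))).mp hthis
    rw [trid, rrv]
    exact harg
  have hμm : ∀ i, i ≤ n → μ i = m i :=
    slopes_unique hx hn hTd0 hTdn hμsys hm0 hmn hsys
  intro u hu
  obtain ⟨i, a, b, hpu⟩ := exists_piece hx hn hu
  rw [hQeq i a b u hpu, hSpiece i a b u hpu, hQherm i a b, hPdef,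
    hμm (i-1) (by omega), hμm i b]
end

section
/- Solvability by radicals of polynomials of degree at most four: for every polynomial p ∈ ℚ[X] with 1 ≤ deg p ≤ 4 and every root α ∈ ℂ of p, the element α is solvable by radicals over ℚ, i.e., α lies in the subfield solvableByRad ℚ ℂ of elements of ℂ obtainable from ℚ by field operations and extraction of n-th roots. -/
open Polynomial

namespace RadAux

local notation "S" => solvableByRad ℚ ℂ

lemma mem_rad {x : ℂ} {n : ℕ} (hn : n ≠ 0) (h : x ^ n ∈ S) : x ∈ S :=
  solvableByRad.rad_mem hn h

lemma nat_mem (n : ℕ) : (n : ℂ) ∈ S := by exact_mod_cast natCast_mem S n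

lemma quad {b c α : ℂ} (hb : b ∈ S) (hc : c ∈ S)
    (h : α ^ 2 + b * α + c = 0) : α ∈ S := by
  have key : (2 * α + b) ^ 2 = b ^ 2 - 4 * c := by linear_combination 4 * h
  have h1 : (2 * α + b) ∈ S := by
    refine mem_rad two_ne_zero ?_
    rw [key]
    exact sub_mem (pow_mem hb 2) (mul_mem (nat_mem 4) hc)
  have : α = ((2 * α + b) - b) / 2 := by ring
  rw [this]
  exact div_mem (sub_mem h1 hb) (nat_mem 2)

lemma cubic_dep {p q α : ℂ} (hp : p ∈ S) (hq : q ∈ S)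
    (h : α ^ 3 + p * α + q = 0) : α ∈ S := by
  by_cases hp0 : p = 0
  · subst hp0
    refine mem_rad three_ne_zero ?_
    have : α ^ 3 = -q := by linear_combination h
    rw [this]; exact neg_mem hq
  · obtain ⟨s, hs⟩ := IsAlgClosed.exists_pow_nat_eq (α ^ 2 + 4 * (p / 3)) two_pos
    obtain ⟨u, hu⟩ : ∃ u : ℂ, u ^ 2 - α * u - p / 3 = 0 :=
      ⟨(α + s) / 2, by linear_combination hs / 4⟩
    have hv : u * (α - u) = -(p / 3) := by linear_combination -hu
    have hu0 : u ≠ 0 := by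
      intro h0
      apply hp0
      rw [h0] at hu
      have : p / 3 = 0 := by linear_combination -hu
      field_simp at this
      simpa using this
    have hsum : u ^ 3 + (α - u) ^ 3 = -q := by
      linear_combination h + 3 * α * hu
    have hprod : u ^ 3 * (α - u) ^ 3 = -(p ^ 3 / 27) := by
      have h3 : (u * (α - u)) ^ 3 = (-(p / 3)) ^ 3 := by rw [hv]
      linear_combination h3
    have hu3 : u ^ 3 ∈ S := by
      refine quad hq (show -(p ^ 3 / 27) ∈ S from
        neg_mem (div_mem (pow_mem hp 3) (nat_mem 27))) ?_
      linear_combination u ^ 3 * hsum - hprod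
    have huS : u ∈ S := mem_rad three_ne_zero hu3
    have hvS : (α - u) ∈ S := by
      have : α - u = -(p / 3) / u := by field_simp; linear_combination 3 * hv
      rw [this]
      exact div_mem (neg_mem (div_mem hp (nat_mem 3))) huS
    have : α = u + (α - u) := by ring
    rw [this]; exact add_mem huS hvS

lemma cubic {b c d α : ℂ} (hb : b ∈ S) (hc : c ∈ S) (hd : d ∈ S)
    (h : α ^ 3 + b * α ^ 2 + c * α + d = 0) : α ∈ S := by
  have key : (α + b / 3) ^ 3 + (c - b ^ 2 / 3) * (α + b / 3)
      + (d - b * c / 3 + 2 * b ^ 3 / 27) = 0 := by linear_combination h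
  have hmem : (α + b / 3) ∈ S :=
    cubic_dep (sub_mem hc (div_mem (pow_mem hb 2) (nat_mem 3)))
      (add_mem (sub_mem hd (div_mem (mul_mem hb hc) (nat_mem 3)))
        (div_mem (mul_mem (nat_mem 2) (pow_mem hb 3)) (nat_mem 27))) key
  have : α = (α + b / 3) - b / 3 := by ring
  rw [this]; exact sub_mem hmem (div_mem hb (nat_mem 3))

lemma quartic_dep {p q r α : ℂ} (hp : p ∈ S) (hq : q ∈ S) (hr : r ∈ S)
    (h : α ^ 4 + p * α ^ 2 + q * α + r = 0) : α ∈ S := by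
  by_cases hq0 : q = 0
  · subst hq0
    refine mem_rad two_ne_zero (quad hp hr ?_)
    linear_combination h
  · obtain ⟨y, hy⟩ : ∃ y : ℂ, y ^ 3 + p * y ^ 2 + ((p ^ 2 - 4 * r) / 4) * y
        + (-(q ^ 2) / 8) = 0 := by
      obtain ⟨z, hz⟩ := IsAlgClosed.exists_root
        (X ^ 3 + C p * X ^ 2 + C ((p ^ 2 - 4 * r) / 4) * X + C (-(q ^ 2) / 8))
        (by
          have : (X ^ 3 + C p * X ^ 2 + C ((p ^ 2 - 4 * r) / 4) * X
              + C (-(q ^ 2) / 8)).degree = 3 := by compute_degree!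
          rw [this]; norm_num)
      exact ⟨z, by simpa [IsRoot] using hz⟩
    have hyS : y ∈ S := cubic hp
      (div_mem (sub_mem (pow_mem hp 2) (mul_mem (nat_mem 4) hr)) (nat_mem 4))
      (div_mem (neg_mem (pow_mem hq 2)) (nat_mem 8)) hy
    have hy0 : y ≠ 0 := by
      intro h0
      apply hq0
      rw [h0] at hy
      have : q ^ 2 = 0 := by linear_combination -8 * hy
      exact pow_eq_zero_iff two_ne_zero |>.mp this
    obtain ⟨s, hs⟩ := IsAlgClosed.exists_pow_nat_eq (2 * y) two_pos
    have hsS : s ∈ S := by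
      refine mem_rad two_ne_zero ?_
      rw [hs]; exact mul_mem (nat_mem 2) hyS
    obtain ⟨m, hm⟩ : ∃ m : ℂ, 4 * y * m = q := ⟨q / (4 * y), by field_simp⟩
    have hmS : m ∈ S := by
      have : m = q / (4 * y) := by
        field_simp
        linear_combination hm
      rw [this]; exact div_mem hq (mul_mem (nat_mem 4) hyS)
    have hres : 8 * y ^ 3 + 8 * p * y ^ 2 + 2 * p ^ 2 * y - 8 * r * y - q ^ 2 = 0 := by
      linear_combination 8 * hy
    have key8 : 8 * y * ((α ^ 2 + p / 2 + y - s * (α - m))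
        * (α ^ 2 + p / 2 + y + s * (α - m))) = 0 := by
      linear_combination 8 * y * h + hres + (8 * y * α - 4 * y * m - q) * hm
        - 8 * y * (α - m) ^ 2 * hs
    have key : (α ^ 2 + p / 2 + y - s * (α - m))
        * (α ^ 2 + p / 2 + y + s * (α - m)) = 0 := by
      rcases mul_eq_zero.mp key8 with h0 | h0
      · exact absurd h0 (by simp [hy0])
      · exact h0
    rcases mul_eq_zero.mp key with hcase | hcase
    · refine quad (b := -s) (c := p / 2 + y + s * m) (neg_mem hsS)
        (add_mem (add_mem (div_mem hp (nat_mem 2)) hyS) (mul_mem hsS hmS)) ?_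
      linear_combination hcase
    · refine quad (b := s) (c := p / 2 + y - s * m) hsS
        (sub_mem (add_mem (div_mem hp (nat_mem 2)) hyS) (mul_mem hsS hmS)) ?_
      linear_combination hcase

lemma quartic {b c d e α : ℂ} (hb : b ∈ S) (hc : c ∈ S) (hd : d ∈ S) (he : e ∈ S)
    (h : α ^ 4 + b * α ^ 3 + c * α ^ 2 + d * α + e = 0) : α ∈ S := by
  have key : (α + b / 4) ^ 4 + (c - 3 * b ^ 2 / 8) * (α + b / 4) ^ 2
      + (d - b * c / 2 + b ^ 3 / 8) * (α + b / 4)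
      + (e - b * d / 4 + b ^ 2 * c / 16 - 3 * b ^ 4 / 256) = 0 := by
    linear_combination h
  have hmem : (α + b / 4) ∈ S :=
    quartic_dep
      (sub_mem hc (div_mem (mul_mem (nat_mem 3) (pow_mem hb 2)) (nat_mem 8)))
      (add_mem (sub_mem hd (div_mem (mul_mem hb hc) (nat_mem 2)))
        (div_mem (pow_mem hb 3) (nat_mem 8)))
      (sub_mem (add_mem (sub_mem he (div_mem (mul_mem hb hd) (nat_mem 4)))
          (div_mem (mul_mem (pow_mem hb 2) hc) (nat_mem 16)))
        (div_mem (mul_mem (nat_mem 3) (pow_mem hb 4)) (nat_mem 256))) key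
  have : α = (α + b / 4) - b / 4 := by ring
  rw [this]; exact sub_mem hmem (div_mem hb (nat_mem 4))

end RadAux

/-- **Solvability by radicals of polynomials of degree at most four:**
every root `α ∈ ℂ` of a polynomial `p ∈ ℚ[X]` with `1 ≤ deg p ≤ 4` lies in the
subfield `solvableByRad ℚ ℂ` of elements of `ℂ` expressible from `ℚ` by field
operations and extraction of `n`-th roots. -/
theorem root_of_degree_le_four_solvableByRad
    (p : Polynomial ℚ) (hdeg₁ : 1 ≤ p.degree) (hdeg₄ : p.degree ≤ 4)
    (α : ℂ) (hα : Polynomial.aeval α p = 0) :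
    α ∈ solvableByRad ℚ ℂ := by
  have hp0 : p ≠ 0 := fun h => by simp [h] at hdeg₁
  set f : ℕ → ℂ := fun i => algebraMap ℚ ℂ (p.coeff i) with hf
  have hfS : ∀ i, f i ∈ solvableByRad ℚ ℂ := fun i =>
    IntermediateField.algebraMap_mem _ _
  have hlead : f p.natDegree ≠ 0 := by
    simp only [hf, ne_eq, _root_.map_eq_zero]
    exact Polynomial.leadingCoeff_ne_zero.mpr hp0
  have hsum : ∑ i ∈ Finset.range (p.natDegree + 1), f i * α ^ i = 0 := by
    rw [← hα, Polynomial.aeval_eq_sum_range]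
    simp [hf, Algebra.smul_def]
  have hn1 : 1 ≤ p.natDegree := by
    have := Polynomial.natDegree_pos_iff_degree_pos.mpr (lt_of_lt_of_le zero_lt_one hdeg₁)
    omega
  have hn4 : p.natDegree ≤ 4 := Polynomial.natDegree_le_iff_degree_le.mpr hdeg₄
  interval_cases hn : p.natDegree
  · -- degree 1
    simp [Finset.sum_range_succ] at hsum
    have : α = -(f 0) / f 1 := by
      field_simp
      linear_combination hsum
    rw [this]
    exact div_mem (neg_mem (hfS 0)) (hfS 1)
  · -- degree 2
    simp [Finset.sum_range_succ] at hsum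
    refine RadAux.quad (b := f 1 / f 2) (c := f 0 / f 2)
      (div_mem (hfS 1) (hfS 2)) (div_mem (hfS 0) (hfS 2)) ?_
    field_simp
    linear_combination hsum
  · -- degree 3
    simp [Finset.sum_range_succ] at hsum
    refine RadAux.cubic (b := f 2 / f 3) (c := f 1 / f 3) (d := f 0 / f 3)
      (div_mem (hfS 2) (hfS 3)) (div_mem (hfS 1) (hfS 3))
      (div_mem (hfS 0) (hfS 3)) ?_
    field_simp
    linear_combination hsum
  · -- degree 4
    simp [Finset.sum_range_succ] at hsum
    refine RadAux.quartic (b := f 3 / f 4) (c := f 2 / f 4) (d := f 1 / f 4)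
      (e := f 0 / f 4) (div_mem (hfS 3) (hfS 4)) (div_mem (hfS 2) (hfS 4))
      (div_mem (hfS 1) (hfS 4)) (div_mem (hfS 0) (hfS 4)) ?_
    field_simp
    linear_combination hsum
end
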